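/- arXiv:1411.1461 — 8 statements merged into one kernel-verified Lean document; each statement's English description precedes it below -/
import Mathlib

section
/- For every R ∈ (0, π) there exists K = K(R) ∈ ℝ such that on the 2-sphere S², for any point x, the squared distance function d(x,·)² is K-convex along every minimal geodesic contained in the open ball B(x,R): for a minimal geodesic γ : [0,1] → B(x,R), d(x,γ(t))² ≤ (1−t) d(x,γ(0))² + t d(x,γ(1))² − (K/2)(1−t)t d(γ(0),γ(1))². -/
/-- The intrinsic (geodesic) distance on the unit sphere `S² ⊆ ℝ³`. -/
noncomputable def sphDist (p q : Metric.sphere (0 : EuclideanSpace ℝ (Fin 3)) 1) : ℝ :=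
  Real.arccos (inner ℝ (p : EuclideanSpace ℝ (Fin 3)) (q : EuclideanSpace ℝ (Fin 3)) : ℝ)

/-- A minimal geodesic of `S²` (parametrized by `[0,1]`, constant speed) with respect to the
intrinsic distance. -/
def IsSphGeodesic (γ : ℝ → Metric.sphere (0 : EuclideanSpace ℝ (Fin 3)) 1) : Prop :=
  ∀ s ∈ Set.Icc (0:ℝ) 1, ∀ t ∈ Set.Icc (0:ℝ) 1,
    sphDist (γ s) (γ t) = |s - t| * sphDist (γ 0) (γ 1)

open Real Set RealInnerProductSpace

lemma aux_sin_ge {θ : ℝ} (h0 : 0 ≤ θ) (hπ : θ ≤ π) : θ * Real.cos θ ≤ Real.sin θ := by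
  rcases le_or_gt (Real.cos θ) 0 with h | h
  · have hs : 0 ≤ Real.sin θ := Real.sin_nonneg_of_nonneg_of_le_pi h0 hπ
    nlinarith
  · have hθ2 : θ < π / 2 := by
      by_contra hc
      push_neg at hc
      have := Real.cos_nonpos_of_pi_div_two_le_of_le hc (by linarith [Real.pi_pos])
      linarith
    rcases eq_or_lt_of_le h0 with h0' | h0'
    · simp [← h0']
    · have htan := Real.lt_tan h0' hθ2
      rw [Real.tan_eq_sin_div_cos] at htan
      have := (lt_div_iff₀ h).mp htan
      linarith

lemma aux_q_anti {θ R : ℝ} (h0 : 0 < θ) (hθR : θ ≤ R) (hR : R < π) :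
    R * Real.cos R / Real.sin R ≤ θ * Real.cos θ / Real.sin θ := by
  have key : AntitoneOn (fun x => x * Real.cos x / Real.sin x) (Set.Ioo 0 π) := by
    have hder : ∀ x ∈ Set.Ioo (0:ℝ) π, HasDerivAt (fun x => x * Real.cos x / Real.sin x)
        (((1 * Real.cos x + x * -Real.sin x) * Real.sin x - x * Real.cos x * Real.cos x) /
          Real.sin x ^ 2) x := by
      intro x hx
      have hs : Real.sin x ≠ 0 := ne_of_gt (Real.sin_pos_of_pos_of_lt_pi hx.1 hx.2)
      exact ((hasDerivAt_id x).mul (Real.hasDerivAt_cos x)).div (Real.hasDerivAt_sin x) hs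
    apply antitoneOn_of_deriv_nonpos (convex_Ioo 0 π)
    · apply ContinuousOn.div (by fun_prop) (by fun_prop)
      intro x hx
      exact ne_of_gt (Real.sin_pos_of_pos_of_lt_pi hx.1 hx.2)
    · rw [interior_Ioo]
      intro x hx
      exact (hder x hx).differentiableAt.differentiableWithinAt
    · rw [interior_Ioo]
      intro x hx
      rw [(hder x hx).deriv]
      have hs : 0 < Real.sin x := Real.sin_pos_of_pos_of_lt_pi hx.1 hx.2
      have h2 : Real.sin (2 * x) < 2 * x := Real.sin_lt (by linarith [hx.1])
      rw [Real.sin_two_mul] at h2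
      have hsq : Real.sin x ^ 2 + Real.cos x ^ 2 = 1 := Real.sin_sq_add_cos_sq x
      apply div_nonpos_of_nonpos_of_nonneg _ (sq_nonneg _)
      have hx1 : x * (Real.sin x ^ 2 + Real.cos x ^ 2) = x := by rw [hsq]; ring
      nlinarith [h2, hx1]
  have hθ : θ ∈ Set.Ioo (0:ℝ) π := ⟨h0, lt_of_le_of_lt hθR hR⟩
  have hRm : R ∈ Set.Ioo (0:ℝ) π := ⟨lt_of_lt_of_le h0 hθR, hR⟩
  exact key hθ hRm hθR

set_option maxHeartbeats 1000000 in
lemma keylem (R L a b : ℝ) (hR0 : 0 < R) (hRπ : R < Real.pi) (hab : a ^ 2 + b ^ 2 ≤ 1)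
    (hlt : ∀ u ∈ Set.Icc (0:ℝ) 1, a * Real.cos (u * L) + b * Real.sin (u * L) < 1)
    (hgt : ∀ u ∈ Set.Icc (0:ℝ) 1, Real.cos R < a * Real.cos (u * L) + b * Real.sin (u * L)) :
    ∀ t ∈ Set.Icc (0:ℝ) 1,
      Real.arccos (a * Real.cos (t * L) + b * Real.sin (t * L)) ^ 2 ≤
        (1 - t) * Real.arccos (a * Real.cos (0 * L) + b * Real.sin (0 * L)) ^ 2
        + t * Real.arccos (a * Real.cos (1 * L) + b * Real.sin (1 * L)) ^ 2
        - (R * Real.cos R / Real.sin R) * (1 - t) * t * L ^ 2 := by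
  intro t ht
  set c : ℝ := R * Real.cos R / Real.sin R with hc
  set g : ℝ → ℝ := fun u => a * Real.cos (u * L) + b * Real.sin (u * L) with hgdef
  set g1 : ℝ → ℝ := fun u => b * L * Real.cos (u * L) - a * L * Real.sin (u * L) with hg1def
  set s : ℝ → ℝ := fun u => Real.sqrt (1 - g u ^ 2) with hsdef
  set Φ : ℝ → ℝ := fun u => Real.arccos (g u) ^ 2 - c * L ^ 2 * u ^ 2 with hΦdef
  set D1 : ℝ → ℝ := fun u => -(2 * Real.arccos (g u)) * g1 u / s u - c * L ^ 2 * (2 * u)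
    with hD1def
  set D2 : ℝ → ℝ := fun u => (2 * g1 u ^ 2 / s u ^ 2 + 2 * Real.arccos (g u) * L ^ 2 * g u / s u
      - 2 * Real.arccos (g u) * g u * g1 u ^ 2 / s u ^ 3) - 2 * c * L ^ 2 with hD2def
  -- basic facts about g on [0,1]
  have hcosRm : (-1:ℝ) < Real.cos R := by
    have := Real.cos_lt_cos_of_nonneg_of_le_pi (le_of_lt hR0) (le_refl π) hRπ
    rw [Real.cos_pi] at this; exact this
  have hg_lt : ∀ u ∈ Set.Icc (0:ℝ) 1, g u < 1 := hlt
  have hg_gt : ∀ u ∈ Set.Icc (0:ℝ) 1, -1 < g u := fun u hu => lt_trans hcosRm (hgt u hu)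
  have hsq_pos : ∀ u ∈ Set.Icc (0:ℝ) 1, 0 < 1 - g u ^ 2 := by
    intro u hu; nlinarith [hg_lt u hu, hg_gt u hu]
  have hs_pos : ∀ u ∈ Set.Icc (0:ℝ) 1, 0 < s u := by
    intro u hu; exact Real.sqrt_pos.mpr (hsq_pos u hu)
  have hs_sq : ∀ u ∈ Set.Icc (0:ℝ) 1, s u ^ 2 = 1 - g u ^ 2 := by
    intro u hu; exact Real.sq_sqrt (le_of_lt (hsq_pos u hu))
  -- derivatives of g and g1 (everywhere)
  have hg_deriv : ∀ u : ℝ, HasDerivAt g (g1 u) u := by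
    intro u
    have h1 : HasDerivAt (fun v : ℝ => v * L) L u := by
      simpa using (hasDerivAt_id u).mul_const L
    have hcos : HasDerivAt (fun v : ℝ => Real.cos (v * L)) (-Real.sin (u * L) * L) u :=
      h1.cos
    have hsin : HasDerivAt (fun v : ℝ => Real.sin (v * L)) (Real.cos (u * L) * L) u :=
      h1.sin
    have := (hcos.const_mul a).add (hsin.const_mul b)
    refine this.congr_deriv (Eq.symm ?_)
    simp [hg1def]; ring
  have hg1_deriv : ∀ u : ℝ, HasDerivAt g1 (-(L ^ 2) * g u) u := by
    intro u
    have h1 : HasDerivAt (fun v : ℝ => v * L) L u := by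
      simpa using (hasDerivAt_id u).mul_const L
    have hcos : HasDerivAt (fun v : ℝ => Real.cos (v * L)) (-Real.sin (u * L) * L) u :=
      h1.cos
    have hsin : HasDerivAt (fun v : ℝ => Real.sin (v * L)) (Real.cos (u * L) * L) u :=
      h1.sin
    have := (hcos.const_mul (b * L)).sub (hsin.const_mul (a * L))
    refine this.congr_deriv (Eq.symm ?_)
    simp [hgdef]; ring
  -- derivative of arccos ∘ g on [0,1]
  have harccos_deriv : ∀ u ∈ Set.Icc (0:ℝ) 1,
      HasDerivAt (fun v => Real.arccos (g v)) (-(1 / s u) * g1 u) u := by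
    intro u hu
    exact (Real.hasDerivAt_arccos (ne_of_gt (hg_gt u hu)) (ne_of_lt (hg_lt u hu))).comp u
      (hg_deriv u)
  -- derivative of Φ on [0,1]
  have hΦ_deriv : ∀ u ∈ Set.Icc (0:ℝ) 1, HasDerivAt Φ (D1 u) u := by
    intro u hu
    have hpow := (harccos_deriv u hu).pow 2
    have hquad : HasDerivAt (fun v : ℝ => c * L ^ 2 * v ^ 2) (c * L ^ 2 * (2 * u)) u := by
      have := (hasDerivAt_pow 2 u).const_mul (c * L ^ 2)
      refine this.congr_deriv (Eq.symm ?_)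
      ring
    have := hpow.sub hquad
    refine this.congr_deriv (Eq.symm ?_)
    have hsne := ne_of_gt (hs_pos u hu)
    rw [hD1def]
    field_simp [hD1def]
    try ring
  -- derivative of s on [0,1]
  have hs_deriv : ∀ u ∈ Set.Icc (0:ℝ) 1, HasDerivAt s (-(g u * g1 u) / s u) u := by
    intro u hu
    have hin : HasDerivAt (fun v => 1 - g v ^ 2) (-(2 * g u ^ 1 * g1 u)) u := by
      have := ((hg_deriv u).pow 2).const_sub 1
      refine this.congr_deriv (Eq.symm ?_)
      norm_num
    have := (Real.hasDerivAt_sqrt (ne_of_gt (hsq_pos u hu))).comp u hin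
    refine this.congr_deriv (Eq.symm ?_)
    have hsne := ne_of_gt (hs_pos u hu)
    rw [hsdef]
    field_simp
    try ring
  -- derivative of D1 on [0,1]
  have hD1_deriv : ∀ u ∈ Set.Icc (0:ℝ) 1, HasDerivAt D1 (D2 u) u := by
    intro u hu
    have hsne := ne_of_gt (hs_pos u hu)
    have hN : HasDerivAt (fun v => -(2 * Real.arccos (g v)) * g1 v)
        ((-(2 * (-(1 / s u) * g1 u))) * g1 u + -(2 * Real.arccos (g u)) * (-(L ^ 2) * g u)) u := by
      have h1 : HasDerivAt (fun v => -(2 * Real.arccos (g v))) (-(2 * (-(1 / s u) * g1 u))) u :=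
        ((harccos_deriv u hu).const_mul 2).neg
      exact h1.mul (hg1_deriv u)
    have hdiv := hN.div (hs_deriv u hu) hsne
    have hlin : HasDerivAt (fun v : ℝ => c * L ^ 2 * (2 * v)) (c * L ^ 2 * 2) u := by
      have := ((hasDerivAt_id u).const_mul (2:ℝ)).const_mul (c * L ^ 2)
      refine this.congr_deriv (Eq.symm ?_)
      ring
    have := hdiv.sub hlin
    refine this.congr_deriv (Eq.symm ?_)
    have hs2 := hs_sq u hu
    rw [hD2def]
    field_simp
    try nlinarith [hs2, sq_nonneg (s u), hs_pos u hu]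
  -- nonnegativity of D2 on [0,1]
  have hD2_nonneg : ∀ u ∈ Set.Icc (0:ℝ) 1, 0 ≤ D2 u := by
    intro u hu
    set θ : ℝ := Real.arccos (g u) with hθ
    have hθpos : 0 < θ := Real.arccos_pos.mpr (hg_lt u hu)
    have hθπ : θ ≤ π := Real.arccos_le_pi _
    have hgθ : Real.cos θ = g u :=
      Real.cos_arccos (le_of_lt (hg_gt u hu)) (le_of_lt (hg_lt u hu))
    have hsθ : Real.sin θ = s u := Real.sin_arccos _
    have hθR : θ ≤ R := by
      by_contra hcon
      push_neg at hcon
      have := Real.cos_lt_cos_of_nonneg_of_le_pi (le_of_lt hR0) hθπ hcon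
      rw [hgθ] at this
      exact absurd (hgt u hu) (not_lt.mpr (le_of_lt this))
    have hq : c ≤ θ * g u / s u := by
      have := aux_q_anti hθpos hθR hRπ
      rw [hgθ, hsθ] at this
      exact this
    have hB : θ * g u ≤ s u := by
      have := aux_sin_ge (le_of_lt hθpos) hθπ
      rw [hgθ, hsθ] at this
      exact this
    have hspos := hs_pos u hu
    have hs2 := hs_sq u hu
    have hg1sq : g1 u ^ 2 ≤ L ^ 2 * s u ^ 2 := by
      have pyth := Real.sin_sq_add_cos_sq (u * L)
      have hkey : g1 u ^ 2 + L ^ 2 * g u ^ 2 = L ^ 2 * (a ^ 2 + b ^ 2) := by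
        simp only [hgdef, hg1def]
        linear_combination (L ^ 2 * (a ^ 2 + b ^ 2)) * pyth
      nlinarith [sq_nonneg L, hs2]
    have hrw : D2 u = 2 * (g1 u ^ 2 / s u ^ 2) * (1 - θ * g u / s u)
        + 2 * L ^ 2 * (θ * g u / s u - c) := by
      rw [hD2def]
      field_simp
      ring
    have h1 : 0 ≤ 2 * (g1 u ^ 2 / s u ^ 2) * (1 - θ * g u / s u) := by
      apply mul_nonneg (by positivity)
      rw [sub_nonneg, div_le_one hspos]
      exact hB
    have h2 : 0 ≤ 2 * L ^ 2 * (θ * g u / s u - c) := by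
      apply mul_nonneg (by positivity)
      rw [sub_nonneg]
      exact hq
    rw [hrw]
    linarith [h1, h2]
  -- convexity of Φ on [0,1]
  have hΦconv : ConvexOn ℝ (Set.Icc (0:ℝ) 1) Φ := by
    apply convexOn_of_deriv2_nonneg (convex_Icc 0 1)
    · apply Continuous.continuousOn
      apply Continuous.sub
      · exact (Real.continuous_arccos.comp (by fun_prop)).pow 2
      · fun_prop
    · rw [interior_Icc]
      intro u hu
      exact (hΦ_deriv u (Set.Ioo_subset_Icc_self hu)).differentiableAt.differentiableWithinAt
    · rw [interior_Icc]
      intro u hu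
      have hev : deriv Φ =ᶠ[nhds u] D1 := by
        filter_upwards [Ioo_mem_nhds hu.1 hu.2] with v hv
        exact (hΦ_deriv v (Set.Ioo_subset_Icc_self hv)).deriv
      exact ((hD1_deriv u (Set.Ioo_subset_Icc_self hu)).differentiableAt.congr_of_eventuallyEq
        hev).differentiableWithinAt
    · rw [interior_Icc]
      intro u hu
      have hev : deriv Φ =ᶠ[nhds u] D1 := by
        filter_upwards [Ioo_mem_nhds hu.1 hu.2] with v hv
        exact (hΦ_deriv v (Set.Ioo_subset_Icc_self hv)).deriv
      have h2 : deriv^[2] Φ u = deriv (deriv Φ) u := rfl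
      rw [h2, hev.deriv_eq, (hD1_deriv u (Set.Ioo_subset_Icc_self hu)).deriv]
      exact hD2_nonneg u (Set.Ioo_subset_Icc_self hu)
  -- conclude
  have h0m : (0:ℝ) ∈ Set.Icc (0:ℝ) 1 := by norm_num
  have h1m : (1:ℝ) ∈ Set.Icc (0:ℝ) 1 := by norm_num
  have hconv := hΦconv.2 h0m h1m (by linarith [ht.2] : (0:ℝ) ≤ 1 - t) ht.1 (by ring)
  simp only [smul_eq_mul, mul_zero, mul_one, zero_add] at hconv
  rw [hΦdef] at hconv
  simp only at hconv
  have hgoal : Real.arccos (g t) ^ 2 ≤ (1 - t) * Real.arccos (g 0) ^ 2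
      + t * Real.arccos (g 1) ^ 2 - c * (1 - t) * t * L ^ 2 := by nlinarith [hconv]
  have e0 : a * Real.cos (0 * L) + b * Real.sin (0 * L) = g 0 := rfl
  have e1 : a * Real.cos (1 * L) + b * Real.sin (1 * L) = g 1 := rfl
  have et : a * Real.cos (t * L) + b * Real.sin (t * L) = g t := rfl
  rw [e0, e1, et]
  linarith [hgoal]

abbrev E3 := EuclideanSpace ℝ (Fin 3)

lemma sph_norm_one (p : Metric.sphere (0 : E3) 1) : ‖(p : E3)‖ = 1 := by
  have := p.2
  rwa [mem_sphere_zero_iff_norm] at this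

lemma sph_inner_le_one (p q : Metric.sphere (0 : E3) 1) : ⟪(p : E3), (q : E3)⟫ ≤ 1 := by
  have := real_inner_le_norm (p : E3) (q : E3)
  rwa [sph_norm_one, sph_norm_one, mul_one] at this

lemma sph_neg_one_le_inner (p q : Metric.sphere (0 : E3) 1) : -1 ≤ ⟪(p : E3), (q : E3)⟫ := by
  have := abs_real_inner_le_norm (p : E3) (q : E3)
  rw [sph_norm_one, sph_norm_one, mul_one] at this
  linarith [abs_le.mp this]

lemma sph_eq_of_inner_one {p q : Metric.sphere (0 : E3) 1}
    (h : ⟪(p : E3), (q : E3)⟫ = 1) : (p : E3) = (q : E3) := by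
  have hn : ‖(p : E3) - (q : E3)‖ ^ 2 = 0 := by
    rw [norm_sub_sq_real, sph_norm_one, sph_norm_one, h]; ring
  have := pow_eq_zero_iff (n := 2) (by norm_num) |>.mp hn
  rwa [norm_sub_eq_zero_iff] at this

lemma sph_cos_sphDist (p q : Metric.sphere (0 : E3) 1) :
    Real.cos (sphDist p q) = ⟪(p : E3), (q : E3)⟫ :=
  Real.cos_arccos (sph_neg_one_le_inner p q) (sph_inner_le_one p q)

set_option maxHeartbeats 1000000 in
/-- for every `R ∈ (0,π)` there is `K = K(R)` such that on `S²` the squared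
distance from any point `x` is `K`-convex along every minimal geodesic contained in the open
ball `B(x,R)`. -/
theorem stmt5 (R : ℝ) (hR0 : 0 < R) (hRπ : R < Real.pi) :
    ∃ K : ℝ, ∀ (x : Metric.sphere (0 : EuclideanSpace ℝ (Fin 3)) 1)
      (γ : ℝ → Metric.sphere (0 : EuclideanSpace ℝ (Fin 3)) 1),
      IsSphGeodesic γ → (∀ t ∈ Set.Icc (0:ℝ) 1, sphDist x (γ t) < R) →
      ∀ t ∈ Set.Icc (0:ℝ) 1,
        sphDist x (γ t) ^ 2 ≤ (1 - t) * sphDist x (γ 0) ^ 2 + t * sphDist x (γ 1) ^ 2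
          - K / 2 * (1 - t) * t * sphDist (γ 0) (γ 1) ^ 2 := by
  have hsinR : 0 < Real.sin R := Real.sin_pos_of_pos_of_lt_pi hR0 hRπ
  refine ⟨2 * (R * Real.cos R / Real.sin R), ?_⟩
  intro x γ hγ hball t ht
  set c : ℝ := R * Real.cos R / Real.sin R with hc
  have hc1 : c ≤ 1 := by
    rw [hc, div_le_one hsinR]
    exact aux_sin_ge hR0.le hRπ.le
  have h0m : (0:ℝ) ∈ Set.Icc (0:ℝ) 1 := by norm_num
  have h1m : (1:ℝ) ∈ Set.Icc (0:ℝ) 1 := by norm_num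
  set L : ℝ := sphDist (γ 0) (γ 1) with hL
  have hL0 : 0 ≤ L := Real.arccos_nonneg _
  have hLπ : L ≤ π := Real.arccos_le_pi _
  -- inner products along the geodesic
  have hinner : ∀ s ∈ Set.Icc (0:ℝ) 1, ∀ u ∈ Set.Icc (0:ℝ) 1,
      ⟪((γ s) : E3), ((γ u) : E3)⟫ = Real.cos ((s - u) * L) := by
    intro s hs u hu
    have h1 := sph_cos_sphDist (γ s) (γ u)
    rw [hγ s hs u hu] at h1
    rw [← h1, show |s - u| * L = |(s - u) * L| by rw [abs_mul, abs_of_nonneg hL0],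
      Real.cos_abs]
  rcases eq_or_lt_of_le hL0 with hLzero | hLpos
  · -- degenerate case: constant geodesic
    have hgam : ∀ u ∈ Set.Icc (0:ℝ) 1, ((γ u) : E3) = ((γ 0) : E3) := by
      intro u hu
      apply sph_eq_of_inner_one
      rw [hinner u hu 0 h0m, ← hLzero, mul_zero, Real.cos_zero]
    have ht' : sphDist x (γ t) = sphDist x (γ 0) := by
      unfold sphDist; rw [hgam t ht]
    have h1' : sphDist x (γ 1) = sphDist x (γ 0) := by
      unfold sphDist; rw [hgam 1 h1m]
    rw [ht', h1', ← hLzero]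
    ring_nf
    nlinarith [sq_nonneg (sphDist x (γ 0))]
  · -- nondegenerate case
    have hsL2 : 0 < Real.sin (L / 2) := by
      apply Real.sin_pos_of_pos_of_lt_pi (by linarith)
      linarith [Real.pi_pos]
    set w : E3 := (Real.sin (L / 2))⁻¹ • (((γ (1/2)) : E3) - Real.cos (L / 2) • ((γ 0) : E3))
      with hw
    have hhalf : (1/2 : ℝ) ∈ Set.Icc (0:ℝ) 1 := by norm_num
    have hγw : ∀ u ∈ Set.Icc (0:ℝ) 1, ⟪((γ u) : E3), w⟫ = Real.sin (u * L) := by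
      intro u hu
      rw [hw, real_inner_smul_right, inner_sub_right, real_inner_smul_right,
        hinner u hu (1/2) hhalf, hinner u hu 0 h0m,
        show (u - 1/2) * L = u * L - L/2 by ring, show (u - 0) * L = u * L by ring,
        Real.cos_sub]
      have pyth := Real.sin_sq_add_cos_sq (L / 2)
      field_simp
      nlinarith [pyth]
    have hw0 : ⟪((γ 0) : E3), w⟫ = 0 := by
      have := hγw 0 h0m
      rwa [zero_mul, Real.sin_zero] at this
    have hi0 : ⟪((γ (1/2)) : E3), ((γ 0) : E3)⟫ = Real.cos (L / 2) := by
      rw [hinner (1/2) hhalf 0 h0m, show ((1:ℝ)/2 - 0) * L = L/2 by ring]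
    have hi0' : ⟪((γ 0) : E3), ((γ (1/2)) : E3)⟫ = Real.cos (L / 2) := by
      rw [real_inner_comm]; exact hi0
    have hi11 : ⟪((γ (1/2)) : E3), ((γ (1/2)) : E3)⟫ = 1 := by
      rw [real_inner_self_eq_norm_sq, sph_norm_one]; norm_num
    have hi00 : ⟪((γ 0) : E3), ((γ 0) : E3)⟫ = 1 := by
      rw [real_inner_self_eq_norm_sq, sph_norm_one]; norm_num
    have hww : ⟪w, w⟫ = 1 := by
      rw [hw]
      simp only [real_inner_smul_left, real_inner_smul_right, inner_sub_left, inner_sub_right,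
        hi0, hi0', hi11, hi00]
      have pyth := Real.sin_sq_add_cos_sq (L / 2)
      field_simp
      nlinarith [pyth]
    have hwn : ‖w‖ = 1 := by
      have h2 : ‖w‖ ^ 2 = 1 := by rw [← real_inner_self_eq_norm_sq, hww]
      nlinarith [norm_nonneg w]
    -- representation of γ u
    have hrep : ∀ u ∈ Set.Icc (0:ℝ) 1,
        ((γ u) : E3) = Real.cos (u * L) • ((γ 0) : E3) + Real.sin (u * L) • w := by
      intro u hu
      have hvv : ‖((γ u) : E3) - (Real.cos (u * L) • ((γ 0) : E3) + Real.sin (u * L) • w)‖ ^ 2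
          = 0 := by
        rw [norm_sub_sq_real, sph_norm_one]
        rw [inner_add_right, real_inner_smul_right, real_inner_smul_right,
          hinner u hu 0 h0m, hγw u hu, show (u - 0) * L = u * L by ring]
        rw [norm_add_sq_real, norm_smul, norm_smul, real_inner_smul_left,
          real_inner_smul_right, hw0, sph_norm_one]
        rw [hwn]
        have pyth := Real.sin_sq_add_cos_sq (u * L)
        simp only [Real.norm_eq_abs, mul_one, sq_abs]
        nlinarith [pyth]
      have := pow_eq_zero_iff (n := 2) (by norm_num) |>.mp hvv
      rwa [norm_sub_eq_zero_iff] at this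
    set a : ℝ := ⟪(x : E3), ((γ 0) : E3)⟫ with ha
    set b : ℝ := ⟪(x : E3), w⟫ with hb
    have hgx : ∀ u ∈ Set.Icc (0:ℝ) 1,
        ⟪(x : E3), ((γ u) : E3)⟫ = a * Real.cos (u * L) + b * Real.sin (u * L) := by
      intro u hu
      rw [hrep u hu, inner_add_right, real_inner_smul_right, real_inner_smul_right]
      ring
    by_cases hex : ∃ s ∈ Set.Icc (0:ℝ) 1, (x : E3) = ((γ s) : E3)
    · -- x lies on the geodesic
      obtain ⟨s, hs, hxs⟩ := hex
      have hd : ∀ u ∈ Set.Icc (0:ℝ) 1, sphDist x (γ u) = |s - u| * L := by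
        intro u hu
        have : sphDist x (γ u) = sphDist (γ s) (γ u) := by unfold sphDist; rw [hxs]
        rw [this, hγ s hs u hu]
      rw [hd t ht, hd 0 h0m, hd 1 h1m]
      rw [mul_pow, mul_pow, mul_pow, sq_abs, sq_abs, sq_abs]
      have h1 : 0 ≤ (1 - t) * t := mul_nonneg (by linarith [ht.2]) ht.1
      have h2 : 0 ≤ L ^ 2 := sq_nonneg L
      nlinarith [mul_nonneg h1 h2, hc1, sq_nonneg (s - t)]
    · -- x not on the geodesic
      push_neg at hex
      have hab : a ^ 2 + b ^ 2 ≤ 1 := by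
        have hxv : ⟪(x : E3), a • ((γ 0) : E3) + b • w⟫ = a ^ 2 + b ^ 2 := by
          rw [inner_add_right, real_inner_smul_right, real_inner_smul_right, ← ha, ← hb]
          ring
        have hv2 : ‖a • ((γ 0) : E3) + b • w‖ ^ 2 = a ^ 2 + b ^ 2 := by
          rw [norm_add_sq_real, norm_smul, norm_smul, real_inner_smul_left,
            real_inner_smul_right, hw0, sph_norm_one, hwn]
          simp only [Real.norm_eq_abs, mul_one, sq_abs]
          ring
        have hnn := sq_nonneg ‖(x : E3) - (a • ((γ 0) : E3) + b • w)‖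
        rw [norm_sub_sq_real, sph_norm_one, hxv, hv2] at hnn
        nlinarith [hnn]
      have hlt : ∀ u ∈ Set.Icc (0:ℝ) 1,
          a * Real.cos (u * L) + b * Real.sin (u * L) < 1 := by
        intro u hu
        rw [← hgx u hu]
        rcases lt_or_eq_of_le (sph_inner_le_one x (γ u)) with h | h
        · exact h
        · exact absurd (sph_eq_of_inner_one h) (hex u hu)
      have hgt : ∀ u ∈ Set.Icc (0:ℝ) 1,
          Real.cos R < a * Real.cos (u * L) + b * Real.sin (u * L) := by
        intro u hu
        rw [← hgx u hu]
        have harc : Real.arccos ⟪(x : E3), ((γ u) : E3)⟫ < R := hball u hu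
        have := Real.cos_lt_cos_of_nonneg_of_le_pi (Real.arccos_nonneg _) hRπ.le harc
        rwa [Real.cos_arccos (sph_neg_one_le_inner x (γ u)) (sph_inner_le_one x (γ u))] at this
      have hkey := keylem R L a b hR0 hRπ hab hlt hgt t ht
      have e0 : sphDist x (γ 0) = Real.arccos (a * Real.cos (0 * L) + b * Real.sin (0 * L)) := by
        unfold sphDist; rw [hgx 0 h0m]
      have e1 : sphDist x (γ 1) = Real.arccos (a * Real.cos (1 * L) + b * Real.sin (1 * L)) := by
        unfold sphDist; rw [hgx 1 h1m]
      have et : sphDist x (γ t) = Real.arccos (a * Real.cos (t * L) + b * Real.sin (t * L)) := by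
        unfold sphDist; rw [hgx t ht]
      rw [e0, e1, et]
      rw [show (2:ℝ) * c / 2 = c from by ring, hc]
      nlinarith [hkey]
end

section
/- Let (M, F) be a Finsler manifold, x ∈ M, and suppose g_v(v,w) = g_w(v,w) for all nonzero v, w ∈ T_x M, where g_v is the fundamental tensor of F at v. Then F² satisfies the parallelogram identity on T_x M: F²(v+w) + F²(v−w) = 2F²(v) + 2F²(w) for all v, w, and hence F restricted to T_x M is induced by an inner product. -/
/-- if the fundamental tensor `g` of a Minkowski norm `F` (on a tangent space `V`)
satisfies the commutativity `g_v(v,w) = g_w(v,w)`, then `F²` satisfies the parallelogram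
identity, and hence `F` is induced by an inner product (a symmetric bilinear form `B` with
`F² = B(v,v)`). -/
theorem stmt6 {V : Type*} [NormedAddCommGroup V] [NormedSpace ℝ V]
    (F : V → ℝ) (g : V → V →ₗ[ℝ] V →ₗ[ℝ] ℝ)
    (hFcont : Continuous F) (hF0 : F 0 = 0) (hFpos : ∀ v : V, v ≠ 0 → 0 < F v)
    (hFhom : ∀ (c : ℝ) (v : V), F (c • v) = |c| * F v)
    (hgsymm : ∀ (v x y : V), g v x y = g v y x)
    (hghom : ∀ (c : ℝ) (v : V), c ≠ 0 → g (c • v) = g v)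
    (hgvv : ∀ v : V, g v v v = F v ^ 2)
    (hcomm : ∀ v w : V, g v v w = g w v w) :
    (∀ v w : V, F (v + w) ^ 2 + F (v - w) ^ 2 = 2 * F v ^ 2 + 2 * F w ^ 2) ∧
      ∃ B : V →ₗ[ℝ] V →ₗ[ℝ] ℝ, (∀ x y : V, B x y = B y x) ∧ ∀ v : V, F v ^ 2 = B v v := by
  have hneg : ∀ w : V, g (-w) = g w := by
    intro w
    have := hghom (-1) w (by norm_num)
    simpa using this
  have hFneg : ∀ w : V, F (-w) = F w := by
    intro w
    have := hFhom (-1) w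
    simpa using this
  have key : ∀ v w : V, F (v + w) ^ 2 = F v ^ 2 + F w ^ 2 + 2 * g w v w := by
    intro v w
    have h1 : g (v + w) (v + w) (v + w) = g (v + w) (v + w) v + g (v + w) (v + w) w :=
      map_add _ _ _
    have h2 : g (v + w) (v + w) v = g v (v + w) v := hcomm (v + w) v
    have h3 : g (v + w) (v + w) w = g w (v + w) w := hcomm (v + w) w
    have h4 : g v (v + w) v = F v ^ 2 + g w v w := by
      have : g v (v + w) v = g v v v + g v w v := by
        rw [map_add]; rfl
      rw [this, hgvv, hgsymm v w v, hcomm v w]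
    have h5 : g w (v + w) w = g w v w + F w ^ 2 := by
      have : g w (v + w) w = g w v w + g w w w := by
        rw [map_add]; rfl
      rw [this, hgvv]
    have := hgvv (v + w)
    rw [h1, h2, h3, h4, h5] at this
    linarith
  have para : ∀ v w : V, F (v + w) ^ 2 + F (v - w) ^ 2 = 2 * F v ^ 2 + 2 * F w ^ 2 := by
    intro v w
    have k1 := key v w
    have k2 := key v (-w)
    rw [hneg, hFneg] at k2
    have hsub : v + -w = v - w := by abel
    rw [hsub] at k2
    have hmn : (g w) v (-w) = -((g w) v w) := by simp
    rw [hmn] at k2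
    linarith
  refine ⟨para, ?_⟩
  refine ⟨LinearMap.mk₂ ℝ (fun v w => g w v w) ?_ ?_ ?_ ?_, ?_, ?_⟩
  · intro v₁ v₂ w
    simp [map_add, LinearMap.add_apply]
  · intro c v w
    simp
  · intro v w₁ w₂
    show g (w₁ + w₂) v (w₁ + w₂) = g w₁ v w₁ + g w₂ v w₂
    rw [← hcomm v (w₁ + w₂), map_add, hcomm v w₁, hcomm v w₂]
  · intro c v w
    show g (c • w) v (c • w) = c • g w v w
    rcases eq_or_ne c 0 with hc | hc
    · simp [hc]
    · rw [hghom c w hc, map_smul]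
  · intro x y
    show g y x y = g x y x
    rw [hgsymm y x y, hcomm y x]
  · intro v
    simp [hgvv]
end

section
/- Key lemma: Let (X,d) be a geodesic metric space in which the commutativity identity holds and the squared distance functions are K-convex along geodesics, and let φ : X → (-∞,∞] be λ-convex. Let x ∈ D(φ), τ > 0, and x_τ a minimizer of w ↦ φ(w) + d(x,w)²/(2τ). Then for every y ∈ D(φ): d(x_τ,y)² ≤ d(x,y)² − λτ d(x_τ,y)² + 2τ(φ(y) − φ(x_τ)) − (K/2) d(x,x_τ)². -/
/-- A curve `γ`, parametrized by `[0,1]`, is a minimal (constant-speed) geodesic. -/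
def IsMinGeodesic {X : Type*} [MetricSpace X] (γ : ℝ → X) : Prop :=
  ∀ s ∈ Set.Icc (0:ℝ) 1, ∀ t ∈ Set.Icc (0:ℝ) 1,
    dist (γ s) (γ t) = |s - t| * dist (γ 0) (γ 1)

/-- Key lemma: in a geodesic metric space satisfying the commutativity identity
and `K`-convexity of squared distance functions along geodesics, for a `λ`-convex
`φ : X → (-∞,∞]`, `x ∈ D(φ)`, `τ > 0` and `x_τ` a minimizer of `w ↦ φ(w) + d(x,w)²/(2τ)`,
one has, for all `y ∈ D(φ)`,
`d(x_τ,y)² ≤ d(x,y)² − λτ d(x_τ,y)² + 2τ(φ(y) − φ(x_τ)) − (K/2) d(x,x_τ)²`. -/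
theorem stmt7 {X : Type*} [MetricSpace X] (K lam τ : ℝ) (hτ : 0 < τ)
    (φ : X → EReal) (hbot : ∀ w, φ w ≠ ⊥)
    (hgeo : ∀ x y : X, ∃ γ : ℝ → X, IsMinGeodesic γ ∧ γ 0 = x ∧ γ 1 = y)
    (hcomm : ∀ γ η : ℝ → X, IsMinGeodesic γ → IsMinGeodesic η → γ 0 = η 0 →
      ∃ L : ℝ,
        Filter.Tendsto (fun s => (dist (γ s) (η 1) ^ 2 - dist (γ 0) (η 1) ^ 2) / s)
          (nhdsWithin 0 (Set.Ioi 0)) (nhds L) ∧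
        Filter.Tendsto (fun t => (dist (η t) (γ 1) ^ 2 - dist (η 0) (γ 1) ^ 2) / t)
          (nhdsWithin 0 (Set.Ioi 0)) (nhds L))
    (hK : ∀ (y : X) (γ : ℝ → X), IsMinGeodesic γ → ∀ t ∈ Set.Icc (0:ℝ) 1,
      dist y (γ t) ^ 2 ≤ (1 - t) * dist y (γ 0) ^ 2 + t * dist y (γ 1) ^ 2
        - K / 2 * (1 - t) * t * dist (γ 0) (γ 1) ^ 2)
    (hlam : ∀ γ : ℝ → X, IsMinGeodesic γ → ∀ t ∈ Set.Icc (0:ℝ) 1,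
      φ (γ t) ≤ ((1 - t : ℝ) : EReal) * φ (γ 0) + ((t : ℝ) : EReal) * φ (γ 1)
        - ((lam / 2 * (1 - t) * t * dist (γ 0) (γ 1) ^ 2 : ℝ) : EReal))
    (x : X) (hx : φ x ≠ ⊤) (xτ : X)
    (hmin : ∀ w, φ xτ + ((dist x xτ ^ 2 / (2 * τ) : ℝ) : EReal)
      ≤ φ w + ((dist x w ^ 2 / (2 * τ) : ℝ) : EReal)) :
    ∀ y : X, φ y ≠ ⊤ →
      ((dist xτ y ^ 2 : ℝ) : EReal)
        ≤ ((dist x y ^ 2 - lam * τ * dist xτ y ^ 2 : ℝ) : EReal)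
          + ((2 * τ : ℝ) : EReal) * (φ y - φ xτ)
          - ((K / 2 * dist x xτ ^ 2 : ℝ) : EReal) := by
  intro y hy
  -- φ xτ is finite
  have hxτtop : φ xτ ≠ ⊤ := by
    intro h
    have hm := hmin x
    rw [h] at hm
    simp only [EReal.top_add_coe] at hm
    exact (EReal.add_lt_top hx (EReal.coe_ne_top _)).ne (top_le_iff.mp hm)
  set A : ℝ := (φ xτ).toReal with hAdef
  set B : ℝ := (φ y).toReal with hBdef
  have hA : ((A : ℝ) : EReal) = φ xτ := EReal.coe_toReal hxτtop (hbot xτ)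
  have hB : ((B : ℝ) : EReal) = φ y := EReal.coe_toReal hy (hbot y)
  obtain ⟨γ, hγ, hγ0, hγ1⟩ := hgeo xτ x
  obtain ⟨η, hη, hη0, hη1⟩ := hgeo xτ y
  obtain ⟨L, hL1, hL2⟩ := hcomm γ η hγ hη (hγ0.trans hη0.symm)
  set C : ℝ := dist x xτ ^ 2 with hCdef
  set D : ℝ := dist xτ y with hDdef
  -- Step 1: lower bound on L
  have step1 : 2 * τ * (A - B + lam / 2 * D ^ 2) ≤ L := by
    have ev : ∀ᶠ t in nhdsWithin 0 (Set.Ioi 0),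
        2 * τ * (A - B + lam / 2 * (1 - t) * D ^ 2)
          ≤ (dist (η t) (γ 1) ^ 2 - dist (η 0) (γ 1) ^ 2) / t := by
      filter_upwards [Ioc_mem_nhdsGT_of_mem (Set.mem_Ico.mpr ⟨le_refl (0:ℝ), one_pos⟩)]
        with t ht
      obtain ⟨ht0, ht1⟩ := ht
      have h1 := hmin (η t)
      have h2 := hlam η hη t ⟨ht0.le, ht1⟩
      rw [hη0, hη1, ← hA, ← hB] at h2
      rw [← EReal.coe_mul, ← EReal.coe_mul, ← EReal.coe_add, ← EReal.coe_sub] at h2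
      have h3 : φ (η t) + ((dist x (η t) ^ 2 / (2 * τ) : ℝ) : EReal)
          ≤ (((1 - t) * A + t * B - lam / 2 * (1 - t) * t * dist xτ y ^ 2
              + dist x (η t) ^ 2 / (2 * τ) : ℝ) : EReal) := by
        rw [EReal.coe_add]
        exact add_le_add_left h2 _
      have h4 : ((A + C / (2 * τ) : ℝ) : EReal)
          ≤ (((1 - t) * A + t * B - lam / 2 * (1 - t) * t * dist xτ y ^ 2
              + dist x (η t) ^ 2 / (2 * τ) : ℝ) : EReal) := by
        rw [EReal.coe_add, hA]
        exact le_trans (hmin (η t)) h3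
      have h5 : A + C / (2 * τ) ≤ (1 - t) * A + t * B
          - lam / 2 * (1 - t) * t * dist xτ y ^ 2 + dist x (η t) ^ 2 / (2 * τ) :=
        EReal.coe_le_coe_iff.mp h4
      rw [hη0, hγ1]
      have hE : dist xτ x = dist x xτ := dist_comm _ _
      have hE2 : dist (η t) x = dist x (η t) := dist_comm _ _
      rw [hE, hE2, le_div_iff₀ ht0]
      rw [← hDdef] at h5
      have h2τ : (0:ℝ) < 2 * τ := by linarith
      have hC' : 2 * τ * (C / (2 * τ)) = C := by field_simp
      have hEt : 2 * τ * (dist x (η t) ^ 2 / (2 * τ)) = dist x (η t) ^ 2 := by field_simp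
      have h7 : 2 * τ * A + C ≤ 2 * τ * ((1 - t) * A + t * B
          - lam / 2 * (1 - t) * t * D ^ 2) + dist x (η t) ^ 2 := by
        have h6 := mul_le_mul_of_nonneg_left h5 h2τ.le
        rw [mul_add, mul_add, hC', hEt] at h6
        linarith
      ring_nf at h7 ⊢
      linarith
    have lim : Filter.Tendsto (fun t : ℝ => 2 * τ * (A - B + lam / 2 * (1 - t) * D ^ 2))
        (nhdsWithin 0 (Set.Ioi 0)) (nhds (2 * τ * (A - B + lam / 2 * D ^ 2))) := by
      have hcont : Continuous fun t : ℝ => 2 * τ * (A - B + lam / 2 * (1 - t) * D ^ 2) :=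
        continuous_const.mul (continuous_const.add
          ((continuous_const.mul (continuous_const.sub continuous_id)).mul continuous_const))
      have h := (hcont.tendsto 0).mono_left (nhdsWithin_le_nhds (s := Set.Ioi (0:ℝ)))
      convert h using 2
      ring
    exact le_of_tendsto_of_tendsto lim hL2 ev
  -- Step 2: upper bound on L
  have step2 : L ≤ dist x y ^ 2 - D ^ 2 - K / 2 * C := by
    have ev : ∀ᶠ s in nhdsWithin 0 (Set.Ioi 0),
        (dist (γ s) (η 1) ^ 2 - dist (γ 0) (η 1) ^ 2) / s
          ≤ dist x y ^ 2 - D ^ 2 - K / 2 * (1 - s) * C := by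
      filter_upwards [Ioc_mem_nhdsGT_of_mem (Set.mem_Ico.mpr ⟨le_refl (0:ℝ), one_pos⟩)]
        with s hs
      obtain ⟨hs0, hs1⟩ := hs
      have h1 := hK y γ hγ s ⟨hs0.le, hs1⟩
      rw [hγ0, hγ1] at h1
      rw [hγ0, hη1, div_le_iff₀ hs0]
      have e1 : dist (γ s) y = dist y (γ s) := dist_comm _ _
      have e2 : dist y xτ = D := dist_comm _ _
      have e3 : dist y x = dist x y := dist_comm _ _
      have e4 : dist xτ x = dist x xτ := dist_comm _ _
      rw [e2, e3, e4] at h1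
      rw [e1, ← hDdef]
      ring_nf at h1 ⊢
      nlinarith [h1]
    have lim : Filter.Tendsto (fun s : ℝ => dist x y ^ 2 - D ^ 2 - K / 2 * (1 - s) * C)
        (nhdsWithin 0 (Set.Ioi 0)) (nhds (dist x y ^ 2 - D ^ 2 - K / 2 * C)) := by
      have hcont : Continuous fun s : ℝ => dist x y ^ 2 - D ^ 2 - K / 2 * (1 - s) * C :=
        (continuous_const.sub continuous_const).sub
          ((continuous_const.mul (continuous_const.sub continuous_id)).mul continuous_const)
      have h := (hcont.tendsto 0).mono_left (nhdsWithin_le_nhds (s := Set.Ioi (0:ℝ)))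
      convert h using 2
      ring
    exact le_of_tendsto_of_tendsto hL1 lim ev
  -- combine
  have hreal : D ^ 2 ≤ dist x y ^ 2 - lam * τ * D ^ 2 + 2 * τ * (B - A) - K / 2 * C := by
    nlinarith [step1, step2, hτ]
  rw [← hA, ← hB, ← EReal.coe_sub, ← EReal.coe_mul, ← EReal.coe_add, ← EReal.coe_sub]
  exact_mod_cast hreal
end

section
/- Second form of the key lemma: under the hypotheses of the key lemma (commutativity, K-convexity of squared distance, λ-convexity of φ, x_τ a Moreau–Yosida minimizer for x with step τ), one has d(x_τ,y)² ≤ d(x,y)² − λτ d(x_τ,y)² + 2τ(φ(y) − φ(x_τ)) + max{0,−K}·τ(φ(x) − φ(x_τ)). -/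
set_option maxHeartbeats 1000000

/-- Key lemma, second form: in a geodesic metric space satisfying the commutativity identity
and `K`-convexity of squared distance functions along geodesics, for a `λ`-convex
`φ : X → (-∞,∞]`, `x ∈ D(φ)`, `τ > 0` and `x_τ` a minimizer of `w ↦ φ(w) + d(x,w)²/(2τ)`,
one has, for all `y ∈ D(φ)`,
`d(x_τ,y)² ≤ d(x,y)² − λτ d(x_τ,y)² + 2τ(φ(y) − φ(x_τ)) + max{0,−K}·τ(φ(x) − φ(x_τ))`. -/
theorem stmt8 {X : Type*} [MetricSpace X] (K lam τ : ℝ) (hτ : 0 < τ)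
    (φ : X → EReal) (hbot : ∀ w, φ w ≠ ⊥)
    (hgeo : ∀ x y : X, ∃ γ : ℝ → X, IsMinGeodesic γ ∧ γ 0 = x ∧ γ 1 = y)
    (hcomm : ∀ γ η : ℝ → X, IsMinGeodesic γ → IsMinGeodesic η → γ 0 = η 0 →
      ∃ L : ℝ,
        Filter.Tendsto (fun s => (dist (γ s) (η 1) ^ 2 - dist (γ 0) (η 1) ^ 2) / s)
          (nhdsWithin 0 (Set.Ioi 0)) (nhds L) ∧
        Filter.Tendsto (fun t => (dist (η t) (γ 1) ^ 2 - dist (η 0) (γ 1) ^ 2) / t)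
          (nhdsWithin 0 (Set.Ioi 0)) (nhds L))
    (hK : ∀ (y : X) (γ : ℝ → X), IsMinGeodesic γ → ∀ t ∈ Set.Icc (0:ℝ) 1,
      dist y (γ t) ^ 2 ≤ (1 - t) * dist y (γ 0) ^ 2 + t * dist y (γ 1) ^ 2
        - K / 2 * (1 - t) * t * dist (γ 0) (γ 1) ^ 2)
    (hlam : ∀ γ : ℝ → X, IsMinGeodesic γ → ∀ t ∈ Set.Icc (0:ℝ) 1,
      φ (γ t) ≤ ((1 - t : ℝ) : EReal) * φ (γ 0) + ((t : ℝ) : EReal) * φ (γ 1)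
        - ((lam / 2 * (1 - t) * t * dist (γ 0) (γ 1) ^ 2 : ℝ) : EReal))
    (x : X) (hx : φ x ≠ ⊤) (xτ : X)
    (hmin : ∀ w, φ xτ + ((dist x xτ ^ 2 / (2 * τ) : ℝ) : EReal)
      ≤ φ w + ((dist x w ^ 2 / (2 * τ) : ℝ) : EReal)) :
    ∀ y : X, φ y ≠ ⊤ →
      ((dist xτ y ^ 2 : ℝ) : EReal)
        ≤ ((dist x y ^ 2 - lam * τ * dist xτ y ^ 2 : ℝ) : EReal)
          + ((2 * τ : ℝ) : EReal) * (φ y - φ xτ)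
          + ((max 0 (-K) * τ : ℝ) : EReal) * (φ x - φ xτ) := by
  intro y hy
  have h2τ : (0:ℝ) < 2 * τ := by linarith
  have hAe : φ x = (((φ x).toReal : ℝ) : EReal) := (EReal.coe_toReal hx (hbot x)).symm
  set A := (φ x).toReal with hA
  -- φ xτ is finite
  have hxτtop : φ xτ ≠ ⊤ := by
    intro h
    have h1 := hmin x
    rw [h, hAe] at h1
    rw [EReal.top_add_coe] at h1
    have : ((A + dist x x ^ 2 / (2 * τ) : ℝ) : EReal) = ⊤ := by
      rw [top_le_iff] at h1
      rw [← h1]; norm_cast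
    exact EReal.coe_ne_top _ this
  have hBe : φ xτ = (((φ xτ).toReal : ℝ) : EReal) := (EReal.coe_toReal hxτtop (hbot xτ)).symm
  set B := (φ xτ).toReal with hB
  have hCe : φ y = (((φ y).toReal : ℝ) : EReal) := (EReal.coe_toReal hy (hbot y)).symm
  set C := (φ y).toReal with hC
  -- d(x,xτ)² ≤ 2τ(A - B)
  have hEA : dist x xτ ^ 2 ≤ 2 * τ * (A - B) := by
    have h1 := hmin x
    rw [hAe, hBe] at h1
    have h1' : B + dist x xτ ^ 2 / (2 * τ) ≤ A + dist x x ^ 2 / (2 * τ) := by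
      exact_mod_cast h1
    rw [dist_self] at h1'
    have : dist x xτ ^ 2 / (2 * τ) ≤ A - B := by
      simp at h1'; linarith
    rw [div_le_iff₀ h2τ] at this
    linarith
  obtain ⟨γ, hγ, hγ0, hγ1⟩ := hgeo xτ y
  obtain ⟨η, hη, hη0, hη1⟩ := hgeo xτ x
  obtain ⟨L, hL1, hL2⟩ := hcomm γ η hγ hη (by rw [hγ0, hη0])
  set D := dist xτ y with hD
  set E := dist x xτ with hE
  set dxy := dist x y with hdxy
  -- real form of minimality + lam-convexity along γ
  have hstar : ∀ t ∈ Set.Ioc (0:ℝ) 1,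
      B + E ^ 2 / (2 * τ) ≤ ((1 - t) * B + t * C - lam / 2 * (1 - t) * t * D ^ 2)
        + dist x (γ t) ^ 2 / (2 * τ) := by
    intro t ht
    have h1 := hmin (γ t)
    have h2 := hlam γ hγ t ⟨ht.1.le, ht.2⟩
    rw [hγ0, hγ1] at h2
    rw [hBe, hCe] at h2
    have hRHS : (((1 - t) : ℝ) : EReal) * ((B : ℝ) : EReal) + ((t : ℝ) : EReal) * ((C : ℝ) : EReal)
        - ((lam / 2 * (1 - t) * t * dist xτ y ^ 2 : ℝ) : EReal)
        = (((1 - t) * B + t * C - lam / 2 * (1 - t) * t * D ^ 2 : ℝ) : EReal) := by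
      rw [hD]; norm_cast
    rw [hRHS] at h2
    have htop : φ (γ t) ≠ ⊤ := by
      intro h; rw [h, top_le_iff] at h2; exact EReal.coe_ne_top _ h2
    rw [← EReal.coe_toReal htop (hbot _)] at h1 h2
    rw [hBe] at h1
    have h1' : B + dist x xτ ^ 2 / (2 * τ) ≤ (φ (γ t)).toReal + dist x (γ t) ^ 2 / (2 * τ) := by
      exact_mod_cast h1
    have h2' : (φ (γ t)).toReal ≤ (1 - t) * B + t * C - lam / 2 * (1 - t) * t * D ^ 2 := by
      exact_mod_cast h2
    rw [← hE] at h1'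
    linarith
  -- lower bound for the first difference quotient
  have hfg : ∀ t ∈ Set.Ioc (0:ℝ) 1,
      lam * τ * (1 - t) * D ^ 2 - 2 * τ * (C - B)
        ≤ (dist (γ t) (η 1) ^ 2 - dist (γ 0) (η 1) ^ 2) / t := by
    intro t ht
    have hs := hstar t ht
    rw [hη1, hγ0]
    rw [le_div_iff₀ ht.1]
    have key : (E ^ 2 - dist x (γ t) ^ 2) / (2 * τ)
        ≤ t * (C - B) - lam / 2 * (1 - t) * t * D ^ 2 := by
      rw [sub_div]; linarith
    rw [div_le_iff₀ h2τ] at key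
    have hc1 : dist (γ t) x = dist x (γ t) := dist_comm _ _
    have hc2 : dist xτ x = E := dist_comm _ _
    rw [hc1, hc2]
    nlinarith [key]
  -- upper bound for the second difference quotient
  have hhu : ∀ t ∈ Set.Ioc (0:ℝ) 1,
      (dist (η t) (γ 1) ^ 2 - dist (η 0) (γ 1) ^ 2) / t
        ≤ dxy ^ 2 - D ^ 2 - K / 2 * (1 - t) * E ^ 2 := by
    intro t ht
    have hk := hK y η hη t ⟨ht.1.le, ht.2⟩
    rw [hη0, hη1] at hk
    rw [dist_comm y xτ, dist_comm y x, dist_comm xτ x, ← hD, ← hE, ← hdxy] at hk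
    rw [hγ1, hη0, div_le_iff₀ ht.1]
    rw [dist_comm (η t) y, ← hD]
    nlinarith [hk]
  -- pass to the limit
  have hmem : Set.Ioc (0:ℝ) 1 ∈ nhdsWithin (0:ℝ) (Set.Ioi 0) :=
    Ioc_mem_nhdsGT_of_mem ⟨le_refl 0, one_pos⟩
  have hGlim : Filter.Tendsto (fun t : ℝ => lam * τ * (1 - t) * D ^ 2 - 2 * τ * (C - B))
      (nhdsWithin (0:ℝ) (Set.Ioi 0)) (nhds (lam * τ * D ^ 2 - 2 * τ * (C - B))) := by
    apply Filter.Tendsto.mono_left _ nhdsWithin_le_nhds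
    exact Continuous.tendsto' (by fun_prop) 0 _ (by ring)
  have hUlim : Filter.Tendsto (fun t : ℝ => dxy ^ 2 - D ^ 2 - K / 2 * (1 - t) * E ^ 2)
      (nhdsWithin (0:ℝ) (Set.Ioi 0)) (nhds (dxy ^ 2 - D ^ 2 - K / 2 * E ^ 2)) := by
    apply Filter.Tendsto.mono_left _ nhdsWithin_le_nhds
    exact Continuous.tendsto' (by fun_prop) 0 _ (by ring)
  have hAineq : lam * τ * D ^ 2 - 2 * τ * (C - B) ≤ L :=
    le_of_tendsto_of_tendsto hGlim hL1 (Filter.eventually_of_mem hmem hfg)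
  have hBineq : L ≤ dxy ^ 2 - D ^ 2 - K / 2 * E ^ 2 :=
    le_of_tendsto_of_tendsto hL2 hUlim (Filter.eventually_of_mem hmem hhu)
  -- combine everything in ℝ
  have hmax1 : -K ≤ max 0 (-K) := le_max_right _ _
  have hmax0 : (0:ℝ) ≤ max 0 (-K) := le_max_left _ _
  have final : D ^ 2 ≤ dxy ^ 2 - lam * τ * D ^ 2 + 2 * τ * (C - B)
      + max 0 (-K) * τ * (A - B) := by
    have h1 : lam * τ * D ^ 2 - 2 * τ * (C - B) ≤ dxy ^ 2 - D ^ 2 - K / 2 * E ^ 2 :=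
      le_trans hAineq hBineq
    have h2 : -K * E ^ 2 ≤ max 0 (-K) * E ^ 2 :=
      mul_le_mul_of_nonneg_right hmax1 (sq_nonneg E)
    have h3 : max 0 (-K) * E ^ 2 ≤ max 0 (-K) * (2 * τ * (A - B)) :=
      mul_le_mul_of_nonneg_left hEA hmax0
    nlinarith [h1, h2, h3]
  -- convert back to EReal
  rw [hAe, hBe, hCe]
  have hrw : ((dxy ^ 2 - lam * τ * D ^ 2 : ℝ) : EReal)
      + ((2 * τ : ℝ) : EReal) * (((C : ℝ) : EReal) - ((B : ℝ) : EReal))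
      + ((max 0 (-K) * τ : ℝ) : EReal) * (((A : ℝ) : EReal) - ((B : ℝ) : EReal))
      = ((dxy ^ 2 - lam * τ * D ^ 2 + 2 * τ * (C - B) + max 0 (-K) * τ * (A - B) : ℝ) : EReal) := by
    norm_cast
  rw [hrw]
  exact_mod_cast final
end

section
/- Gronwall-type lemma: let f : [0,T] → [0,∞) be absolutely continuous, λ ≤ 0, and g, h : [0,T] → [0,∞) locally integrable, with f'(t) + 2λ f(t) ≤ 2 g(t) √(f(t)) + h(t) for a.e. t. Then e^{λT} √(f(T)) ≤ (f(0) + ∫_0^T e^{2λt} h(t) dt)^{1/2} + ∫_0^T e^{λt} g(t) dt. -/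
open MeasureTheory

open Set Interval

/-- Fubini swap on the triangle `{0 ≤ q ≤ r ≤ s}`. -/
lemma tri_swap {s : ℝ} (hs : 0 ≤ s) {k m : ℝ → ℝ}
    (hk : IntervalIntegrable k volume 0 s) (hm : IntervalIntegrable m volume 0 s) :
    ∫ r in (0:ℝ)..s, k r * (∫ q in (0:ℝ)..r, m q) =
      ∫ q in (0:ℝ)..s, (∫ r in q..s, k r) * m q := by
  have hk' : IntegrableOn k (Ioc 0 s) volume :=
    (intervalIntegrable_iff_integrableOn_Ioc_of_le hs).1 hk
  have hm' : IntegrableOn m (Ioc 0 s) volume :=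
    (intervalIntegrable_iff_integrableOn_Ioc_of_le hs).1 hm
  set μ : Measure ℝ := volume.restrict (Ioc 0 s) with hμ
  set F : ℝ → ℝ → ℝ :=
    fun r q => ({p : ℝ × ℝ | p.2 ≤ p.1}.indicator (fun p => k p.1 * m p.2)) (r, q) with hF
  have hFint : Integrable (Function.uncurry F) (μ.prod μ) := by
    have h1 : Integrable (fun p : ℝ × ℝ => k p.1 * m p.2) (μ.prod μ) := hk'.mul_prod hm'
    have h2 := h1.indicator (measurableSet_le measurable_snd measurable_fst)
    exact h2
  have inner1 : ∀ r ∈ Ioc (0:ℝ) s, (∫ q, F r q ∂μ) = k r * ∫ q in (0:ℝ)..r, m q := by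
    intro r hr
    have h1 : (fun q => F r q) = (Iic r).indicator (fun q => k r * m q) := by
      funext q
      simp [hF, Set.indicator_apply, Set.mem_Iic]
    rw [h1, integral_indicator measurableSet_Iic, hμ,
      Measure.restrict_restrict measurableSet_Iic]
    have h2 : Iic r ∩ Ioc 0 s = Ioc 0 r := by
      ext x
      simp only [mem_inter_iff, mem_Iic, mem_Ioc]
      constructor
      · rintro ⟨hx1, hx2, _⟩; exact ⟨hx2, hx1⟩
      · rintro ⟨hx1, hx2⟩; exact ⟨hx2, hx1, hx2.trans hr.2⟩
    rw [h2, intervalIntegral.integral_of_le hr.1.le, MeasureTheory.integral_const_mul]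
  have inner2 : ∀ q ∈ Ioc (0:ℝ) s, (∫ r, F r q ∂μ) = (∫ r in q..s, k r) * m q := by
    intro q hq
    have h1 : (fun r => F r q) = (Ici q).indicator (fun r => k r * m q) := by
      funext r
      simp [hF, Set.indicator_apply, Set.mem_Ici]
    rw [h1, integral_indicator measurableSet_Ici, hμ,
      Measure.restrict_restrict measurableSet_Ici]
    have h2 : Ici q ∩ Ioc 0 s = Icc q s := by
      ext x
      simp only [mem_inter_iff, mem_Ici, mem_Ioc, mem_Icc]
      constructor
      · rintro ⟨hx1, _, hx3⟩; exact ⟨hx1, hx3⟩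
      · rintro ⟨hx1, hx2⟩; exact ⟨hx1, hq.1.trans_le hx1, hx2⟩
    rw [h2, MeasureTheory.integral_Icc_eq_integral_Ioc,
      intervalIntegral.integral_of_le hq.2, MeasureTheory.integral_mul_const]
  calc ∫ r in (0:ℝ)..s, k r * (∫ q in (0:ℝ)..r, m q)
      = ∫ r in Ioc (0:ℝ) s, k r * (∫ q in (0:ℝ)..r, m q) :=
        intervalIntegral.integral_of_le hs
    _ = ∫ r, (∫ q, F r q ∂μ) ∂μ :=
        setIntegral_congr_fun measurableSet_Ioc (fun r hr => (inner1 r hr).symm)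
    _ = ∫ q, (∫ r, F r q ∂μ) ∂μ := integral_integral_swap hFint
    _ = ∫ q in Ioc (0:ℝ) s, (∫ r in q..s, k r) * m q :=
        setIntegral_congr_fun measurableSet_Ioc (fun q hq => inner2 q hq)
    _ = ∫ q in (0:ℝ)..s, (∫ r in q..s, k r) * m q :=
        (intervalIntegral.integral_of_le hs).symm

lemma sqrt_add_le' {x y : ℝ} (hx : 0 ≤ x) (hy : 0 ≤ y) :
    Real.sqrt (x + y) ≤ Real.sqrt x + Real.sqrt y := by
  have h1 := Real.sq_sqrt hx
  have h2 := Real.sq_sqrt hy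
  have h3 := Real.sqrt_nonneg x
  have h4 := Real.sqrt_nonneg y
  have h5 : x + y ≤ (Real.sqrt x + Real.sqrt y)^2 := by nlinarith
  calc Real.sqrt (x + y) ≤ Real.sqrt ((Real.sqrt x + Real.sqrt y)^2) :=
        Real.sqrt_le_sqrt h5
    _ = Real.sqrt x + Real.sqrt y := Real.sqrt_sq (by positivity)

lemma gronwall_core {T : ℝ} (hT : 0 ≤ T) {φ a b : ℝ → ℝ}
    (hφc : ContinuousOn φ (Icc 0 T)) (hφ0 : 0 ≤ φ 0)
    (ha : IntervalIntegrable a volume 0 T) (hb : IntervalIntegrable b volume 0 T)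
    (hann : ∀ t ∈ Icc (0:ℝ) T, 0 ≤ a t) (hbnn : ∀ t ∈ Icc (0:ℝ) T, 0 ≤ b t)
    (hcomp : ∀ s ∈ Icc (0:ℝ) T,
      φ s ≤ φ 0 + ∫ t in (0:ℝ)..s, (2 * a t * Real.sqrt (φ t) + b t)) :
    Real.sqrt (φ T) ≤ Real.sqrt (φ 0 + ∫ t in (0:ℝ)..T, b t) + ∫ t in (0:ℝ)..T, a t := by
  have hIccT : uIcc (0:ℝ) T = Icc 0 T := uIcc_of_le hT
  have haSub : ∀ {u v : ℝ}, u ∈ Icc (0:ℝ) T → v ∈ Icc (0:ℝ) T →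
      IntervalIntegrable a volume u v := fun hu hv =>
    ha.mono_set (uIcc_subset_uIcc (hIccT ▸ hu) (hIccT ▸ hv))
  have hbSub : ∀ {u v : ℝ}, u ∈ Icc (0:ℝ) T → v ∈ Icc (0:ℝ) T →
      IntervalIntegrable b volume u v := fun hu hv =>
    hb.mono_set (uIcc_subset_uIcc (hIccT ▸ hu) (hIccT ▸ hv))
  have h0T : (0:ℝ) ∈ Icc (0:ℝ) T := left_mem_Icc.2 hT
  have hAc : ContinuousOn (fun s => ∫ t in (0:ℝ)..s, a t) (Icc 0 T) := by
    have := intervalIntegral.continuousOn_primitive_interval' ha (left_mem_uIcc)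
    rwa [hIccT] at this
  have hBc : ContinuousOn (fun s => ∫ t in (0:ℝ)..s, b t) (Icc 0 T) := by
    have := intervalIntegral.continuousOn_primitive_interval' hb (left_mem_uIcc)
    rwa [hIccT] at this
  have hAnn : ∀ t ∈ Icc (0:ℝ) T, 0 ≤ ∫ x in (0:ℝ)..t, a x := fun t ht =>
    intervalIntegral.integral_nonneg ht.1 (fun u hu => hann u ⟨hu.1, hu.2.trans ht.2⟩)
  have hBnn : ∀ t ∈ Icc (0:ℝ) T, 0 ≤ ∫ x in (0:ℝ)..t, b x := fun t ht =>
    intervalIntegral.integral_nonneg ht.1 (fun u hu => hbnn u ⟨hu.1, hu.2.trans ht.2⟩)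
  have hBmono : ∀ {t u : ℝ}, t ∈ Icc (0:ℝ) T → u ∈ Icc (0:ℝ) T → t ≤ u →
      (∫ x in (0:ℝ)..t, b x) ≤ ∫ x in (0:ℝ)..u, b x := by
    intro t u ht hu htu
    have hadd := intervalIntegral.integral_add_adjacent_intervals
      (hbSub h0T ht) (hbSub ht hu)
    have hpos : 0 ≤ ∫ x in t..u, b x :=
      intervalIntegral.integral_nonneg htu
        (fun x hx => hbnn x ⟨ht.1.trans hx.1, hx.2.trans hu.2⟩)
    linarith
  have hsqc : ContinuousOn (fun t => Real.sqrt (φ t)) (Icc 0 T) :=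
    Real.continuous_sqrt.comp_continuousOn hφc
  have hInt1 : ∀ s ∈ Icc (0:ℝ) T,
      IntervalIntegrable (fun t => 2 * a t * Real.sqrt (φ t) + b t) volume 0 s := by
    intro s hs
    have h1 : IntervalIntegrable (fun t => 2 * a t) volume 0 s :=
      (haSub h0T hs).const_mul 2
    have h2 : [[(0:ℝ), s]] ⊆ Icc 0 T := by
      rw [uIcc_of_le hs.1]; exact Icc_subset_Icc le_rfl hs.2
    exact (h1.mul_continuousOn (hsqc.mono h2)).add (hbSub h0T hs)
  have key : ∀ ε : ℝ, 0 < ε →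
      φ T < (Real.sqrt (φ 0 + (∫ t in (0:ℝ)..T, b t) + ε) + ∫ t in (0:ℝ)..T, a t)^2 := by
    intro ε hε
    by_contra hcon
    push_neg at hcon
    set ψ : ℝ → ℝ :=
      fun t => (Real.sqrt (φ 0 + (∫ x in (0:ℝ)..t, b x) + ε) + ∫ x in (0:ℝ)..t, a x)^2
      with hψdef
    have hψc : ContinuousOn ψ (Icc 0 T) :=
      ((Real.continuous_sqrt.comp_continuousOn
        ((continuousOn_const.add hBc).add continuousOn_const)).add hAc).pow 2
    set S : Set ℝ := {t | t ∈ Icc (0:ℝ) T ∧ ψ t ≤ φ t} with hSdef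
    have hSne : S.Nonempty := ⟨T, ⟨⟨hT, le_rfl⟩, hcon⟩⟩
    have hSclosed : IsClosed S := by
      have hSeq : S = Icc (0:ℝ) T ∩ (fun t => φ t - ψ t) ⁻¹' (Ici 0) := by
        ext t
        simp only [hSdef, mem_setOf_eq, mem_inter_iff, mem_preimage, mem_Ici, sub_nonneg]
      rw [hSeq]
      exact (hφc.sub hψc).preimage_isClosed_of_isClosed isClosed_Icc isClosed_Ici
    have hSbdd : BddBelow S := ⟨0, fun x hx => hx.1.1⟩
    set t₀ := sInf S with ht₀def
    have ht₀S : t₀ ∈ S := hSclosed.csInf_mem hSne hSbdd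
    obtain ⟨⟨h0t₀, ht₀T⟩, hψφ⟩ := ht₀S
    have ht₀Icc : t₀ ∈ Icc (0:ℝ) T := ⟨h0t₀, ht₀T⟩
    have hbefore : ∀ t, 0 ≤ t → t < t₀ → φ t < ψ t := by
      intro t ht htlt
      by_contra hcon2
      push_neg at hcon2
      have htS : t ∈ S := ⟨⟨ht, htlt.le.trans ht₀T⟩, hcon2⟩
      exact absurd (csInf_le hSbdd htS) (not_le.2 htlt)
    set c₀ := Real.sqrt (φ 0 + (∫ x in (0:ℝ)..t₀, b x) + ε) with hc₀def
    have hc₀nn : 0 ≤ c₀ := Real.sqrt_nonneg _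
    have hmem : Icc (0:ℝ) t₀ ⊆ Icc 0 T := Icc_subset_Icc le_rfl ht₀T
    have hsub0 : [[(0:ℝ), t₀]] ⊆ Icc (0:ℝ) T := by
      rw [uIcc_of_le h0t₀]; exact hmem
    have step1 : φ t₀ ≤ φ 0 + ∫ t in (0:ℝ)..t₀, (2 * a t * Real.sqrt (φ t) + b t) :=
      hcomp t₀ ht₀Icc
    have hInt2 : IntervalIntegrable
        (fun t => 2 * a t * (c₀ + ∫ x in (0:ℝ)..t, a x) + b t) volume 0 t₀ := by
      have h1 : IntervalIntegrable (fun t => 2 * a t) volume 0 t₀ :=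
        (haSub h0T ht₀Icc).const_mul 2
      exact (h1.mul_continuousOn ((continuousOn_const.add hAc).mono hsub0)).add
        (hbSub h0T ht₀Icc)
    have step2 : (∫ t in (0:ℝ)..t₀, (2 * a t * Real.sqrt (φ t) + b t))
        ≤ ∫ t in (0:ℝ)..t₀, (2 * a t * (c₀ + ∫ x in (0:ℝ)..t, a x) + b t) := by
      apply intervalIntegral.integral_mono_ae_restrict h0t₀ (hInt1 t₀ ht₀Icc) hInt2
      have hne : ∀ᵐ t ∂(volume : Measure ℝ), t ≠ t₀ := by
        rw [ae_iff]
        have hset : {t : ℝ | ¬ t ≠ t₀} = {t₀} := by ext t; simp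
        rw [hset]
        exact Real.volume_singleton
      filter_upwards [ae_restrict_of_ae hne, ae_restrict_mem measurableSet_Icc]
        with t htne htmem
      have htT : t ∈ Icc (0:ℝ) T := hmem htmem
      have h1 : Real.sqrt (φ t) ≤ c₀ + ∫ x in (0:ℝ)..t, a x := by
        have hφψ : φ t < ψ t := hbefore t htmem.1 (lt_of_le_of_ne htmem.2 htne)
        have h2 : Real.sqrt (φ t) ≤ Real.sqrt (ψ t) := Real.sqrt_le_sqrt hφψ.le
        have h3 : Real.sqrt (ψ t)
            = Real.sqrt (φ 0 + (∫ x in (0:ℝ)..t, b x) + ε) + ∫ x in (0:ℝ)..t, a x :=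
          Real.sqrt_sq (add_nonneg (Real.sqrt_nonneg _) (hAnn t htT))
        have h4 : Real.sqrt (φ 0 + (∫ x in (0:ℝ)..t, b x) + ε) ≤ c₀ := by
          apply Real.sqrt_le_sqrt
          have := hBmono htT ht₀Icc htmem.2
          linarith
        linarith
      have h2a : (0:ℝ) ≤ 2 * a t := by have := hann t htT; linarith
      nlinarith [mul_le_mul_of_nonneg_left h1 h2a]
    have hIntaA : IntervalIntegrable (fun q => (∫ x in (0:ℝ)..q, a x) * a q) volume 0 t₀ :=
      (haSub h0T ht₀Icc).continuousOn_mul (hAc.mono hsub0)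
    have halfsq : (∫ t in (0:ℝ)..t₀, a t * ∫ x in (0:ℝ)..t, a x)
        = (∫ x in (0:ℝ)..t₀, a x)^2 / 2 := by
      have htri := tri_swap h0t₀ (haSub h0T ht₀Icc) (haSub h0T ht₀Icc)
      have hRHS : (∫ q in (0:ℝ)..t₀, (∫ r in q..t₀, a r) * a q)
          = ∫ q in (0:ℝ)..t₀, ((∫ x in (0:ℝ)..t₀, a x) - ∫ x in (0:ℝ)..q, a x) * a q := by
        apply intervalIntegral.integral_congr
        intro q hq
        have hqIcc : q ∈ Icc (0:ℝ) T := hsub0 hq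
        have hadd := intervalIntegral.integral_add_adjacent_intervals
          (haSub h0T hqIcc) (haSub hqIcc ht₀Icc)
        simp only
        rw [← hadd]; ring
      have he : (fun q => ((∫ x in (0:ℝ)..t₀, a x) - ∫ x in (0:ℝ)..q, a x) * a q)
          = fun q => (∫ x in (0:ℝ)..t₀, a x) * a q - (∫ x in (0:ℝ)..q, a x) * a q := by
        funext q; ring
      have hsplit : (∫ q in (0:ℝ)..t₀,
            ((∫ x in (0:ℝ)..t₀, a x) - ∫ x in (0:ℝ)..q, a x) * a q)
          = (∫ x in (0:ℝ)..t₀, a x) * (∫ x in (0:ℝ)..t₀, a x)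
            - ∫ q in (0:ℝ)..t₀, (∫ x in (0:ℝ)..q, a x) * a q := by
        rw [he, intervalIntegral.integral_sub
          ((haSub h0T ht₀Icc).const_mul _) hIntaA, intervalIntegral.integral_const_mul]
      have hcomm : (∫ t in (0:ℝ)..t₀, a t * ∫ x in (0:ℝ)..t, a x)
          = ∫ q in (0:ℝ)..t₀, (∫ x in (0:ℝ)..q, a x) * a q := by
        apply intervalIntegral.integral_congr
        intro q _
        simp only [mul_comm]
      have hsq : (∫ x in (0:ℝ)..t₀, a x)^2
          = (∫ x in (0:ℝ)..t₀, a x) * (∫ x in (0:ℝ)..t₀, a x) := sq _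
      linarith [htri, hRHS, hsplit, hcomm]
    have step3 : (∫ t in (0:ℝ)..t₀, (2 * a t * (c₀ + ∫ x in (0:ℝ)..t, a x) + b t))
        = 2 * c₀ * (∫ x in (0:ℝ)..t₀, a x) + (∫ x in (0:ℝ)..t₀, a x)^2
          + ∫ x in (0:ℝ)..t₀, b x := by
      have he : (fun t => 2 * a t * (c₀ + ∫ x in (0:ℝ)..t, a x) + b t)
          = fun t => ((2 * c₀) * a t + 2 * (a t * ∫ x in (0:ℝ)..t, a x)) + b t := by
        funext t; ring
      have hIntaA' : IntervalIntegrable (fun t => a t * ∫ x in (0:ℝ)..t, a x) volume 0 t₀ :=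
        (haSub h0T ht₀Icc).mul_continuousOn (hAc.mono hsub0)
      rw [he, intervalIntegral.integral_add
        (((haSub h0T ht₀Icc).const_mul _).add (hIntaA'.const_mul 2)) (hbSub h0T ht₀Icc),
        intervalIntegral.integral_add ((haSub h0T ht₀Icc).const_mul _) (hIntaA'.const_mul 2),
        intervalIntegral.integral_const_mul, intervalIntegral.integral_const_mul, halfsq]
      ring
    have hc₀sq : c₀^2 = φ 0 + (∫ x in (0:ℝ)..t₀, b x) + ε := by
      rw [hc₀def]
      exact Real.sq_sqrt (by have := hBnn t₀ ht₀Icc; linarith)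
    have hψt₀ : ψ t₀ = φ 0 + (∫ x in (0:ℝ)..t₀, b x) + ε
        + 2 * c₀ * (∫ x in (0:ℝ)..t₀, a x) + (∫ x in (0:ℝ)..t₀, a x)^2 := by
      simp only [hψdef]
      rw [← hc₀def, add_sq, hc₀sq]
    linarith [step1, step2, step3, hψφ, hψt₀]
  apply le_of_forall_pos_le_add
  intro ε hε
  have hTnn : (T:ℝ) ∈ Icc (0:ℝ) T := right_mem_Icc.2 hT
  have hk := key (ε^2) (by positivity)
  have h1 : Real.sqrt (φ T)
      ≤ Real.sqrt (φ 0 + (∫ t in (0:ℝ)..T, b t) + ε^2) + ∫ t in (0:ℝ)..T, a t := by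
    have h2 := Real.sqrt_le_sqrt hk.le
    rwa [Real.sqrt_sq (add_nonneg (Real.sqrt_nonneg _) (hAnn T hTnn))] at h2
  have h2 : Real.sqrt (φ 0 + (∫ t in (0:ℝ)..T, b t) + ε^2)
      ≤ Real.sqrt (φ 0 + ∫ t in (0:ℝ)..T, b t) + ε := by
    have h3 := sqrt_add_le' (add_nonneg hφ0 (hBnn T hTnn)) (sq_nonneg ε)
    rwa [Real.sqrt_sq hε.le] at h3
  linarith

/-- Gronwall-type lemma: if `f ≥ 0` is absolutely continuous on `[0,T]` with
a.e. derivative `f'`, `λ ≤ 0`, `g, h ≥ 0` integrable, and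
`f' + 2λ f ≤ 2 g √f + h` a.e., then
`e^{λT} √(f T) ≤ (f 0 + ∫₀^T e^{2λt} h)^{1/2} + ∫₀^T e^{λt} g`. -/
theorem stmt10 (T lam : ℝ) (hT : 0 < T) (hlam : lam ≤ 0)
    (f f' g h : ℝ → ℝ)
    (hfnn : ∀ t ∈ Set.Icc (0:ℝ) T, 0 ≤ f t)
    (hgnn : ∀ t ∈ Set.Icc (0:ℝ) T, 0 ≤ g t)
    (hhnn : ∀ t ∈ Set.Icc (0:ℝ) T, 0 ≤ h t)
    (hg : IntervalIntegrable g volume 0 T)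
    (hh : IntervalIntegrable h volume 0 T)
    (hf' : IntervalIntegrable f' volume 0 T)
    (hderiv : ∀ᵐ t ∂(volume.restrict (Set.Icc (0:ℝ) T)), HasDerivAt f (f' t) t)
    (hftc : ∀ s ∈ Set.Icc (0:ℝ) T, f s = f 0 + ∫ t in (0:ℝ)..s, f' t)
    (hineq : ∀ᵐ t ∂(volume.restrict (Set.Icc (0:ℝ) T)),
      f' t + 2 * lam * f t ≤ 2 * g t * Real.sqrt (f t) + h t) :
    Real.exp (lam * T) * Real.sqrt (f T)
      ≤ Real.sqrt (f 0 + ∫ t in (0:ℝ)..T, Real.exp (2 * lam * t) * h t)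
        + ∫ t in (0:ℝ)..T, Real.exp (lam * t) * g t := by
  have hTle : (0:ℝ) ≤ T := hT.le
  have hEc : Continuous fun t : ℝ => Real.exp (2 * lam * t) := (continuous_const.mul continuous_id).rexp
  have hec : Continuous fun t : ℝ => Real.exp (lam * t) := (continuous_const.mul continuous_id).rexp
  have hkc : Continuous fun t : ℝ => 2 * lam * Real.exp (2 * lam * t) :=
    continuous_const.mul hEc
  have hEdouble : ∀ t : ℝ, Real.exp (2 * lam * t) = Real.exp (lam * t) * Real.exp (lam * t) := by
    intro t
    rw [← Real.exp_add]
    ring_nf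
  -- continuity of f on [0,T]
  have hprim : ContinuousOn (fun x => ∫ t in (0:ℝ)..x, f' t) (Icc 0 T) := by
    have := intervalIntegral.continuousOn_primitive_interval' hf' (left_mem_uIcc)
    rwa [uIcc_of_le hTle] at this
  have hfc : ContinuousOn f (Icc 0 T) :=
    (continuousOn_const.add hprim).congr (fun s hs => hftc s hs)
  have hφc : ContinuousOn (fun t => Real.exp (2 * lam * t) * f t) (Icc 0 T) :=
    hEc.continuousOn.mul hfc
  have h0Icc : (0:ℝ) ∈ Icc (0:ℝ) T := left_mem_Icc.2 hTle
  have hφzero : Real.exp (2 * lam * 0) * f 0 = f 0 := by norm_num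
  have hφ0 : 0 ≤ Real.exp (2 * lam * 0) * f 0 := by
    rw [hφzero]; exact hfnn 0 h0Icc
  -- integrability of a and b
  have ha : IntervalIntegrable (fun t => Real.exp (lam * t) * g t) volume 0 T :=
    hg.continuousOn_mul hec.continuousOn
  have hb : IntervalIntegrable (fun t => Real.exp (2 * lam * t) * h t) volume 0 T :=
    hh.continuousOn_mul hEc.continuousOn
  have hann : ∀ t ∈ Icc (0:ℝ) T, 0 ≤ Real.exp (lam * t) * g t := fun t ht =>
    mul_nonneg (Real.exp_nonneg _) (hgnn t ht)
  have hbnn : ∀ t ∈ Icc (0:ℝ) T, 0 ≤ Real.exp (2 * lam * t) * h t := fun t ht =>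
    mul_nonneg (Real.exp_nonneg _) (hhnn t ht)
  -- derivative of the exponential weight
  have hED : ∀ x : ℝ, HasDerivAt (fun t => Real.exp (2 * lam * t))
      (2 * lam * Real.exp (2 * lam * x)) x := by
    intro x
    have h1 : HasDerivAt (fun t : ℝ => 2 * lam * t) (2 * lam) x := by
      simpa using (hasDerivAt_id x).const_mul (2 * lam)
    have h2 := h1.exp
    convert h2 using 1
    ring
  have hEftc : ∀ u v : ℝ, (∫ r in u..v, 2 * lam * Real.exp (2 * lam * r))
      = Real.exp (2 * lam * v) - Real.exp (2 * lam * u) := fun u v =>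
    intervalIntegral.integral_eq_sub_of_hasDerivAt (fun x _ => hED x)
      (hkc.intervalIntegrable u v)
  -- representation of the weighted function
  have hφrep : ∀ s ∈ Icc (0:ℝ) T,
      Real.exp (2 * lam * s) * f s
        = f 0 + ∫ t in (0:ℝ)..s,
            (Real.exp (2 * lam * t) * f' t + 2 * lam * Real.exp (2 * lam * t) * f t) := by
    intro s hs
    have hsub : uIcc (0:ℝ) s ⊆ Icc 0 T := by
      rw [uIcc_of_le hs.1]; exact Icc_subset_Icc le_rfl hs.2
    have hf's : IntervalIntegrable f' volume 0 s := by
      apply hf'.mono_set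
      rw [uIcc_of_le hTle]; exact hsub
    have hks : IntervalIntegrable (fun r => 2 * lam * Real.exp (2 * lam * r)) volume 0 s :=
      hkc.intervalIntegrable 0 s
    have hI1 : IntervalIntegrable (fun t => Real.exp (2 * lam * t) * f' t) volume 0 s :=
      hf's.continuousOn_mul (hEc.continuousOn.mono hsub)
    have hI2 : IntervalIntegrable (fun t => 2 * lam * Real.exp (2 * lam * t) * f t)
        volume 0 s := hks.mul_continuousOn (hfc.mono hsub)
    have htri := tri_swap hs.1 hks hf's
    have hL : (∫ r in (0:ℝ)..s, (2 * lam * Real.exp (2 * lam * r)) * ∫ q in (0:ℝ)..r, f' q)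
        = ∫ r in (0:ℝ)..s, ((2 * lam * Real.exp (2 * lam * r)) * f r
            - (2 * lam * Real.exp (2 * lam * r)) * f 0) := by
      apply intervalIntegral.integral_congr
      intro r hr
      have hr' := hftc r (hsub hr)
      simp only
      rw [hr']; ring
    have hR : (∫ q in (0:ℝ)..s, (∫ r in q..s, 2 * lam * Real.exp (2 * lam * r)) * f' q)
        = ∫ q in (0:ℝ)..s, (Real.exp (2 * lam * s) * f' q
            - Real.exp (2 * lam * q) * f' q) := by
      apply intervalIntegral.integral_congr
      intro q _
      simp only
      rw [hEftc q s]; ring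
    have hL2 : (∫ r in (0:ℝ)..s, ((2 * lam * Real.exp (2 * lam * r)) * f r
          - (2 * lam * Real.exp (2 * lam * r)) * f 0))
        = (∫ r in (0:ℝ)..s, 2 * lam * Real.exp (2 * lam * r) * f r)
          - (Real.exp (2 * lam * s) - 1) * f 0 := by
      rw [intervalIntegral.integral_sub hI2 (hks.mul_const (f 0)),
        intervalIntegral.integral_mul_const, hEftc 0 s]
      norm_num
    have hR2 : (∫ q in (0:ℝ)..s, (Real.exp (2 * lam * s) * f' q
          - Real.exp (2 * lam * q) * f' q))
        = Real.exp (2 * lam * s) * (f s - f 0)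
          - ∫ q in (0:ℝ)..s, Real.exp (2 * lam * q) * f' q := by
      rw [intervalIntegral.integral_sub (hf's.const_mul _) hI1,
        intervalIntegral.integral_const_mul]
      have := hftc s hs
      have hint : (∫ q in (0:ℝ)..s, f' q) = f s - f 0 := by linarith
      rw [hint]
    have hsum : (∫ t in (0:ℝ)..s,
          (Real.exp (2 * lam * t) * f' t + 2 * lam * Real.exp (2 * lam * t) * f t))
        = (∫ t in (0:ℝ)..s, Real.exp (2 * lam * t) * f' t)
          + ∫ t in (0:ℝ)..s, 2 * lam * Real.exp (2 * lam * t) * f t :=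
      intervalIntegral.integral_add hI1 hI2
    rw [hsum]
    rw [hL, hL2, hR, hR2] at htri
    linarith
  -- the comparison hypothesis for the core lemma
  have hsqφ : ∀ t : ℝ, Real.sqrt (Real.exp (2 * lam * t) * f t)
      = Real.exp (lam * t) * Real.sqrt (f t) := by
    intro t
    rw [hEdouble t, Real.sqrt_mul (by positivity : (0:ℝ) ≤ Real.exp (lam * t) * Real.exp (lam * t)),
      Real.sqrt_mul_self (Real.exp_nonneg _)]
  have hcomp : ∀ s ∈ Icc (0:ℝ) T,
      Real.exp (2 * lam * s) * f s
        ≤ Real.exp (2 * lam * 0) * f 0 + ∫ t in (0:ℝ)..s,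
            (2 * (Real.exp (lam * t) * g t)
              * Real.sqrt (Real.exp (2 * lam * t) * f t)
              + Real.exp (2 * lam * t) * h t) := by
    intro s hs
    rw [hφzero, hφrep s hs]
    have hsub : uIcc (0:ℝ) s ⊆ Icc 0 T := by
      rw [uIcc_of_le hs.1]; exact Icc_subset_Icc le_rfl hs.2
    have hf's : IntervalIntegrable f' volume 0 s := by
      apply hf'.mono_set
      rw [uIcc_of_le hTle]; exact hsub
    have hks : IntervalIntegrable (fun r => 2 * lam * Real.exp (2 * lam * r)) volume 0 s :=
      hkc.intervalIntegrable 0 s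
    have hI1 : IntervalIntegrable (fun t => Real.exp (2 * lam * t) * f' t) volume 0 s :=
      hf's.continuousOn_mul (hEc.continuousOn.mono hsub)
    have hI2 : IntervalIntegrable (fun t => 2 * lam * Real.exp (2 * lam * t) * f t)
        volume 0 s := hks.mul_continuousOn (hfc.mono hsub)
    have hIR : IntervalIntegrable (fun t =>
        2 * (Real.exp (lam * t) * g t) * Real.sqrt (Real.exp (2 * lam * t) * f t)
          + Real.exp (2 * lam * t) * h t) volume 0 s := by
      have h1 : IntervalIntegrable (fun t => 2 * (Real.exp (lam * t) * g t)) volume 0 s := by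
        apply IntervalIntegrable.const_mul
        apply ha.mono_set
        rw [uIcc_of_le hTle]; exact hsub
      have h2 : ContinuousOn (fun t => Real.sqrt (Real.exp (2 * lam * t) * f t))
          (uIcc (0:ℝ) s) :=
        Real.continuous_sqrt.comp_continuousOn (hφc.mono hsub)
      have h3 : IntervalIntegrable (fun t => Real.exp (2 * lam * t) * h t) volume 0 s := by
        apply hb.mono_set
        rw [uIcc_of_le hTle]; exact hsub
      exact (h1.mul_continuousOn h2).add h3
    apply add_le_add le_rfl
    apply intervalIntegral.integral_mono_ae_restrict hs.1 (hI1.add hI2) hIR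
    have hIccsub : Icc (0:ℝ) s ⊆ Icc (0:ℝ) T := Icc_subset_Icc le_rfl hs.2
    filter_upwards [ae_restrict_of_ae_restrict_of_subset hIccsub hineq,
      ae_restrict_mem measurableSet_Icc] with t hte htmem
    have htT : t ∈ Icc (0:ℝ) T := hIccsub htmem
    have hmul := mul_le_mul_of_nonneg_left hte (Real.exp_nonneg (2 * lam * t))
    calc Real.exp (2 * lam * t) * f' t + 2 * lam * Real.exp (2 * lam * t) * f t
        = Real.exp (2 * lam * t) * (f' t + 2 * lam * f t) := by ring
      _ ≤ Real.exp (2 * lam * t) * (2 * g t * Real.sqrt (f t) + h t) := hmul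
      _ = 2 * (Real.exp (lam * t) * g t) * (Real.exp (lam * t) * Real.sqrt (f t))
            + Real.exp (2 * lam * t) * h t := by
          rw [hEdouble t]; ring
      _ = 2 * (Real.exp (lam * t) * g t) * Real.sqrt (Real.exp (2 * lam * t) * f t)
            + Real.exp (2 * lam * t) * h t := by rw [hsqφ t]
  -- apply the core lemma
  have hmain := gronwall_core hTle hφc hφ0 ha hb hann hbnn hcomp
  rw [hφzero, hsqφ T] at hmain
  exact hmain
end

section
/- Under the EVI hypothesis of the previous statement, and using that t ↦ φ(ξ(t)) is non-increasing, one obtains for all T > 0 and y ∈ D(φ): d(ξ(T),y)² ≤ e^{−λT} d(x₀,y)² − 2((1 − e^{−λT})/λ)(φ(ξ(T)) − φ(y)), where (1 − e^{−λT})/λ is interpreted as T when λ = 0. -/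
open MeasureTheory Set intervalIntegral

lemma stmt14_mono_aux {f : ℝ → ℝ} {s b K : ℝ} (hsb : s ≤ b) (hK : 0 ≤ K)
    (hf : ContinuousOn f (Set.Icc s b))
    (h : ∀ u v : ℝ, s ≤ u → u ≤ v → v ≤ b →
      ∫ t in u..v, f t ≤ (v - u) * f u + K * (v - u) ^ 3) :
    f b ≤ f s := by
  rcases eq_or_lt_of_le hsb with rfl | hlt
  · exact le_rfl
  have H : ∀ ε : ℝ, 0 < ε → f b ≤ f s + ε * (b - s) := by
    intro ε hε
    set g : ℝ → ℝ := fun t => f t - ε * t with hg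
    have hgc : ContinuousOn g (Set.Icc s b) :=
      hf.sub ((continuous_const.mul continuous_id).continuousOn)
    set S : Set ℝ := Set.Icc s b ∩ g ⁻¹' (Set.Iic (g s)) with hS
    have hclosed : IsClosed S := hgc.preimage_isClosed_of_isClosed isClosed_Icc isClosed_Iic
    have hsS : s ∈ S := ⟨⟨le_rfl, hsb⟩, by simp [Set.mem_preimage]⟩
    have hbdd : BddAbove S := ⟨b, fun x hx => hx.1.2⟩
    set c := sSup S with hc
    have hcS : c ∈ S := hclosed.csSup_mem ⟨s, hsS⟩ hbdd
    have hsc : s ≤ c := hcS.1.1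
    have hgc2 : g c ≤ g s := hcS.2
    rcases eq_or_lt_of_le hcS.1.2 with hcb | hcb
    · -- c = b
      have : f b - ε * b ≤ f s - ε * s := by rw [← hcb]; exact hgc2
      linarith
    · exfalso
      set v := min b (c + ε / (4 * (K + 1))) with hv
      have hKpos : (0:ℝ) < K + 1 := by linarith
      have hεK : 0 < ε / (4 * (K + 1)) := div_pos hε (by linarith)
      have hv1 : c < v := lt_min hcb (by linarith)
      have hv2 : v ≤ b := min_le_left _ _
      have hvc : v - c ≤ ε / (4 * (K + 1)) := by
        have : v ≤ c + ε / (4 * (K + 1)) := min_le_right _ _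
        linarith
      have hKv : K * (v - c) ≤ ε / 4 := by
        have h1 : K * (v - c) ≤ K * (ε / (4 * (K + 1))) :=
          mul_le_mul_of_nonneg_left hvc hK
        have h2 : K * (ε / (4 * (K + 1))) ≤ ε / 4 := by
          rw [div_mul_eq_div_div ε 4 (K+1)] at *
          rw [mul_comm, div_mul_eq_mul_div, div_le_iff₀ hKpos] at *
          nlinarith
        linarith
      have happ := h c v hsc hv1.le hv2
      have hsub : Set.uIcc c v ⊆ Set.Icc s b := by
        rw [Set.uIcc_of_le hv1.le]
        exact Set.Icc_subset_Icc hsc hv2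
      have hfint : IntervalIntegrable f volume c v :=
        (hf.mono hsub).intervalIntegrable
      have hgint : IntervalIntegrable g volume c v :=
        (hgc.mono hsub).intervalIntegrable
      have hid : IntervalIntegrable (fun t : ℝ => ε * t) volume c v :=
        ((continuous_const.mul continuous_id).continuousOn).intervalIntegrable
      have hgi : ∫ t in c..v, g t = (∫ t in c..v, f t) - ε * ((v ^ 2 - c ^ 2) / 2) := by
        rw [intervalIntegral.integral_sub hfint hid, intervalIntegral.integral_const_mul,
          integral_id]
      have key : ∫ t in c..v, g t < (v - c) * g c := by
        have e1 : (v - c) * g c = (v - c) * f c - ε * c * (v - c) := by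
          simp only [hg]; ring
        have e2 : K * (v - c) ^ 3 ≤ (ε / 4) * (v - c) ^ 2 := by
          have : K * (v - c) * (v - c) ^ 2 ≤ (ε / 4) * (v - c) ^ 2 :=
            mul_le_mul_of_nonneg_right hKv (by positivity)
          nlinarith
        have e3 : (0:ℝ) < (v - c) ^ 2 := pow_pos (sub_pos.2 hv1) 2
        rw [hgi, e1]
        nlinarith [happ]
      have hexists : ∃ t ∈ Set.Icc c v, g t < g c := by
        by_contra hcon
        push_neg at hcon
        have : ∫ t in c..v, (fun _ => g c) t ≤ ∫ t in c..v, g t :=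
          intervalIntegral.integral_mono_on hv1.le
            (intervalIntegrable_const) hgint hcon
        rw [intervalIntegral.integral_const, smul_eq_mul, mul_comm] at this
        linarith [key]
      obtain ⟨t, ht, hgt⟩ := hexists
      have htS : t ∈ S := ⟨⟨hsc.trans ht.1, ht.2.trans hv2⟩, le_trans hgt.le hgc2⟩
      have : t ≤ c := le_csSup hbdd htS
      have : t = c := le_antisymm this ht.1
      rw [this] at hgt
      exact lt_irrefl _ hgt
  by_contra hcon
  push_neg at hcon
  have hb : 0 < b - s := by linarith
  have hd : 0 < (f b - f s) / (2 * (b - s)) := by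
    apply div_pos (by linarith) (by linarith)
  have := H ((f b - f s) / (2 * (b - s))) hd
  rw [div_mul_eq_mul_div, mul_comm (2:ℝ) (b-s), ← div_div, mul_div_assoc] at this
  rw [div_self (ne_of_gt hb)] at this
  linarith

/-- under the EVI hypothesis, using also that `t ↦ φ(ξ(t))` is non-increasing,
for all `T > 0` and `y ∈ D(φ)`,
`d(ξ(T),y)² ≤ e^{−λT} d(x₀,y)² − 2((1 − e^{−λT})/λ)(φ(ξ(T)) − φ(y))`,
where `(1 − e^{−λT})/λ` is interpreted as `T` when `λ = 0`. -/
theorem stmt14 {X : Type*} [MetricSpace X] [CompleteSpace X]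
    (φ : X → EReal) (hbot : ∀ w, φ w ≠ ⊥) (hlsc : LowerSemicontinuous φ)
    (lam : ℝ) (ξ : ℝ → X) (x0 : X) (hξ0 : ξ 0 = x0) (hx0 : φ x0 ≠ ⊤)
    (hlip : ∀ a b : ℝ, 0 < a → a ≤ b → ∃ C : ℝ, ∀ s ∈ Set.Icc a b, ∀ t ∈ Set.Icc a b,
      dist (ξ s) (ξ t) ≤ C * |s - t|)
    (hfin : ∀ t ∈ Set.Ici (0:ℝ), φ (ξ t) ≠ ⊤)
    (hφcont : ContinuousOn (fun t => (φ (ξ t)).toReal) (Set.Ici 0))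
    (D : X → ℝ → ℝ)
    (hint : ∀ y : X, ∀ s ∈ Set.Ici (0:ℝ), IntervalIntegrable (D y) volume 0 s)
    (hftc : ∀ y : X, ∀ s ∈ Set.Ici (0:ℝ),
      dist (ξ s) y ^ 2 = dist x0 y ^ 2 + ∫ t in (0:ℝ)..s, D y t)
    (hEVI : ∀ y : X, φ y ≠ ⊤ →
      ∀ᵐ t ∂(volume.restrict (Set.Ioi (0:ℝ))),
        1 / 2 * D y t + lam / 2 * dist (ξ t) y ^ 2 + (φ (ξ t)).toReal ≤ (φ y).toReal) :
    ∀ T : ℝ, 0 < T → ∀ y : X, φ y ≠ ⊤ →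
      dist (ξ T) y ^ 2 ≤ Real.exp (-lam * T) * dist x0 y ^ 2
        - 2 * (if lam = 0 then T else (1 - Real.exp (-lam * T)) / lam) *
          ((φ (ξ T)).toReal - (φ y).toReal) := by
  intro T hT y hy
  set f : ℝ → ℝ := fun t => (φ (ξ t)).toReal with hfdef
  -- interval integrability of D z on any [u,v] ⊆ [0,∞)
  have hintuv : ∀ z : X, ∀ u v : ℝ, 0 ≤ u → 0 ≤ v → IntervalIntegrable (D z) volume u v :=
    fun z u v hu hv => (hint z u hu).symm.trans (hint z v hv)
  -- continuity of the squared distance along the curve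
  have ψcont : ∀ z : X, ContinuousOn (fun t => dist (ξ t) z ^ 2) (Set.Ici 0) := by
    intro z
    have hprim : ContinuousOn (fun t => dist x0 z ^ 2 + ∫ s in (0:ℝ)..t, D z s) (Set.Ici 0) := by
      apply continuousOn_const.add
      intro t₀ ht₀
      have h1 : ContinuousOn (fun t => ∫ s in (0:ℝ)..t, D z s) (Set.uIcc 0 (t₀ + 1)) :=
        continuousOn_primitive_interval' (hint z (t₀ + 1) (by simp only [Set.mem_Ici] at ht₀ ⊢; linarith))
          left_mem_uIcc
      rw [Set.uIcc_of_le (by simp only [Set.mem_Ici] at ht₀; linarith)] at h1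
      have h2 : ContinuousWithinAt (fun t => ∫ s in (0:ℝ)..t, D z s) (Set.Icc 0 (t₀ + 1)) t₀ :=
        h1 t₀ ⟨ht₀, by linarith⟩
      apply h2.mono_of_mem_nhdsWithin
      apply mem_nhdsWithin.mpr
      exact ⟨Set.Iio (t₀ + 1), isOpen_Iio, by simp, fun x hx => ⟨hx.2, hx.1.le⟩⟩
    exact hprim.congr (fun t ht => hftc z t ht)
  -- integral of D z between two nonneg times
  have hDint : ∀ z : X, ∀ u v : ℝ, 0 ≤ u → 0 ≤ v →
      ∫ t in u..v, D z t = dist (ξ v) z ^ 2 - dist (ξ u) z ^ 2 := by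
    intro z u v hu hv
    rw [hftc z v hv, hftc z u hu]
    rw [← intervalIntegral.integral_interval_sub_left (hint z v hv) (hint z u hu)]
    ring
  -- transfer a.e. statements from Ioi 0 to Icc u v
  have haeIcc : ∀ (P : ℝ → Prop) (u v : ℝ), 0 ≤ u →
      (∀ᵐ t ∂(volume.restrict (Set.Ioi (0:ℝ))), P t) →
      (∀ᵐ t ∂(volume.restrict (Set.Icc u v)), P t) := by
    intro P u v hu hP
    rw [← Measure.restrict_congr_set Ioc_ae_eq_Icc]
    exact ae_restrict_of_ae_restrict_of_subset
      (fun t ht => lt_of_le_of_lt hu ht.1) hP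
  -- integrated EVI over [u,v]
  have eviInt : ∀ z : X, φ z ≠ ⊤ → ∀ u v : ℝ, 0 ≤ u → u ≤ v →
      1 / 2 * (dist (ξ v) z ^ 2 - dist (ξ u) z ^ 2)
        + ∫ t in u..v, (lam / 2 * dist (ξ t) z ^ 2 + f t)
      ≤ (v - u) * (φ z).toReal := by
    intro z hz u v hu huv
    have hv : (0:ℝ) ≤ v := hu.trans huv
    have hae := haeIcc _ u v hu (hEVI z hz)
    have int1 : IntervalIntegrable (fun t => 1 / 2 * D z t) volume u v :=
      (hintuv z u v hu hv).const_mul (1 / 2)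
    have hsubI : Set.uIcc u v ⊆ Set.Ici (0:ℝ) := by
      rw [Set.uIcc_of_le huv]; exact fun t ht => hu.trans ht.1
    have int2 : IntervalIntegrable (fun t => lam / 2 * dist (ξ t) z ^ 2 + f t) volume u v :=
      (((continuousOn_const.mul (ψcont z)).add hφcont).mono hsubI).intervalIntegrable
    have hmono : ∫ t in u..v, (1 / 2 * D z t + (lam / 2 * dist (ξ t) z ^ 2 + f t))
        ≤ ∫ _ in u..v, (φ z).toReal := by
      refine intervalIntegral.integral_mono_ae_restrict huv (int1.add int2)
        intervalIntegrable_const ?_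
      filter_upwards [hae] with t ht
      linarith
    rw [intervalIntegral.integral_add int1 int2, intervalIntegral.integral_const_mul,
      hDint z u v hu hv, intervalIntegral.integral_const, smul_eq_mul] at hmono
    linarith
  -- Step: the key cubic-error inequality on compact subintervals of (0,∞)
  have key1 : ∀ s b : ℝ, 0 < s → s ≤ b → ∃ K : ℝ, 0 ≤ K ∧ ∀ u v : ℝ,
      s ≤ u → u ≤ v → v ≤ b → ∫ t in u..v, f t ≤ (v - u) * f u + K * (v - u) ^ 3 := by
    intro s b hs hsb
    obtain ⟨C, hC⟩ := hlip s b hs hsb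
    refine ⟨|lam| / 2 * C ^ 2, by positivity, ?_⟩
    intro u v hsu huv hvb
    have hu0 : (0:ℝ) ≤ u := (hs.trans_le hsu).le
    have hEz := eviInt (ξ u) (hfin u hu0) u v hu0 huv
    rw [dist_self] at hEz
    have hsubI : Set.uIcc u v ⊆ Set.Ici (0:ℝ) := by
      rw [Set.uIcc_of_le huv]; exact fun t ht => hu0.trans ht.1
    have intψ : IntervalIntegrable (fun t => lam / 2 * dist (ξ t) (ξ u) ^ 2) volume u v :=
      ((continuousOn_const.mul (ψcont (ξ u))).mono hsubI).intervalIntegrable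
    have intf : IntervalIntegrable f volume u v :=
      (hφcont.mono hsubI).intervalIntegrable
    have hcq : Continuous fun t : ℝ => -(|lam| / 2 * C ^ 2) * (t - u) ^ 2 :=
      continuous_const.mul ((continuous_id.sub continuous_const).pow 2)
    have intq : IntervalIntegrable (fun t => -(|lam| / 2 * C ^ 2) * (t - u) ^ 2) volume u v :=
      hcq.intervalIntegrable u v
    -- pointwise lower bound for the ψ-term
    have hpt : ∀ t ∈ Set.Icc u v, -(|lam| / 2 * C ^ 2) * (t - u) ^ 2
        ≤ lam / 2 * dist (ξ t) (ξ u) ^ 2 := by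
      intro t ht
      have htmem : t ∈ Set.Icc s b := ⟨hsu.trans ht.1, ht.2.trans hvb⟩
      have humem : u ∈ Set.Icc s b := ⟨hsu, huv.trans hvb⟩
      have hd : dist (ξ t) (ξ u) ≤ C * |t - u| := hC t htmem u humem
      have hd2 : dist (ξ t) (ξ u) ^ 2 ≤ (C * |t - u|) ^ 2 :=
        pow_le_pow_left₀ dist_nonneg hd 2
      have habs : (C * |t - u|) ^ 2 = C ^ 2 * (t - u) ^ 2 := by
        rw [mul_pow, sq_abs]
      rw [habs] at hd2
      have h0 : (0:ℝ) ≤ dist (ξ t) (ξ u) ^ 2 := by positivity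
      have e1 : -|lam| * dist (ξ t) (ξ u) ^ 2 ≤ lam * dist (ξ t) (ξ u) ^ 2 :=
        mul_le_mul_of_nonneg_right (neg_abs_le lam) h0
      have e2 : |lam| * dist (ξ t) (ξ u) ^ 2 ≤ |lam| * (C ^ 2 * (t - u) ^ 2) :=
        mul_le_mul_of_nonneg_left hd2 (abs_nonneg lam)
      nlinarith
    have hJ : ∫ t in u..v, -(|lam| / 2 * C ^ 2) * (t - u) ^ 2
        ≤ ∫ t in u..v, lam / 2 * dist (ξ t) (ξ u) ^ 2 :=
      intervalIntegral.integral_mono_on huv intq intψ hpt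
    have hcomp : ∫ t in u..v, -(|lam| / 2 * C ^ 2) * (t - u) ^ 2
        = -(|lam| / 2 * C ^ 2) * ((v - u) ^ 3 / 3) := by
      rw [intervalIntegral.integral_const_mul]
      have := intervalIntegral.integral_comp_sub_right (fun x : ℝ => x ^ 2) u (a := u) (b := v)
      rw [this, sub_self]
      rw [integral_pow]
      norm_num
    rw [hcomp] at hJ
    rw [intervalIntegral.integral_add intψ intf] at hEz
    have hd0 : (0:ℝ) ≤ dist (ξ v) (ξ u) ^ 2 := by positivity
    have hcube : (0:ℝ) ≤ |lam| / 2 * C ^ 2 * (v - u) ^ 3 :=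
      mul_nonneg (by positivity) (pow_nonneg (by linarith) 3)
    nlinarith [hJ, hEz]
  -- monotonicity of f on (0,∞)
  have monoF : ∀ u v : ℝ, 0 < u → u ≤ v → f v ≤ f u := by
    intro u v hu huv
    obtain ⟨K, hK0, hK⟩ := key1 u v hu huv
    exact stmt14_mono_aux huv hK0
      (hφcont.mono (fun t ht => le_trans hu.le ht.1)) hK
  -- monotonicity down to 0
  have monoT : ∀ x : ℝ, x ∈ Set.Ico (0:ℝ) T → f T ≤ f x := by
    intro x hx
    rcases eq_or_lt_of_le hx.1 with rfl | hx0
    · have htend : Filter.Tendsto f (nhdsWithin 0 (Set.Ioi 0)) (nhds (f 0)) :=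
        (hφcont 0 (by simp)).mono_left (nhdsWithin_mono _ (fun t ht => Set.mem_Ici.mpr (le_of_lt ht)))
      refine ge_of_tendsto htend ?_
      filter_upwards [Ioo_mem_nhdsGT_of_mem (Set.left_mem_Ico.mpr hT)] with s hs
      exact monoF s T hs.1 hs.2.le
    · exact monoF x T hx0 hx.2.le
  -- Gronwall
  set ψ : ℝ → ℝ := fun t => dist (ξ t) y ^ 2 with hψdef
  set p : ℝ := (φ y).toReal with hpdef
  set G : ℝ → ℝ := fun t => -lam * dist (ξ t) y ^ 2 + (2 * p - 2 * f t) with hGdef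
  have hGcont : ContinuousOn G (Set.Ici 0) :=
    (continuousOn_const.mul (ψcont y)).add
      (continuousOn_const.sub (continuousOn_const.mul hφcont))
  have haeD : ∀ᵐ t ∂(volume.restrict (Set.Ioi (0:ℝ))), D y t ≤ G t := by
    filter_upwards [hEVI y hy] with t ht
    simp only [hGdef]
    linarith
  have hf' : ∀ x ∈ Set.Ico (0:ℝ) T, ∀ r, G x < r →
      ∃ᶠ z in nhdsWithin x (Set.Ioi x), (z - x)⁻¹ * (ψ z - ψ x) < r := by
    intro x hx r hr
    obtain ⟨r', hr'1, hr'2⟩ := exists_between hr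
    have htd : Filter.Tendsto G (nhdsWithin x (Set.Ici 0)) (nhds (G x)) :=
      hGcont x hx.1
    have hev : ∀ᶠ t in nhdsWithin x (Set.Ici 0), G t < r' :=
      htd.eventually_lt_const hr'1
    rcases Metric.mem_nhdsWithin_iff.mp hev with ⟨δ', hδ', hsub⟩
    apply Filter.Eventually.frequently
    filter_upwards [Ioo_mem_nhdsGT_of_mem
      (Set.left_mem_Ico.mpr (lt_add_of_pos_right x hδ'))] with z hz
    have hxz : x < z := hz.1
    have hz2 : z < x + δ' := hz.2
    have hx0 : (0:ℝ) ≤ x := hx.1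
    have hz0 : (0:ℝ) ≤ z := hx0.trans hxz.le
    have hψz : ψ z - ψ x = ∫ t in x..z, D y t := (hDint y x z hx0 hz0).symm
    have hsubI : Set.uIcc x z ⊆ Set.Ici (0:ℝ) := by
      rw [Set.uIcc_of_le hxz.le]; exact fun t ht => hx0.trans ht.1
    have hGint : IntervalIntegrable G volume x z :=
      (hGcont.mono hsubI).intervalIntegrable
    have h1 : ∫ t in x..z, D y t ≤ ∫ t in x..z, G t :=
      intervalIntegral.integral_mono_ae_restrict hxz.le (hintuv y x z hx0 hz0) hGint
        (haeIcc _ x z hx0 haeD)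
    have h2 : ∫ t in x..z, G t ≤ ∫ _ in x..z, r' := by
      refine intervalIntegral.integral_mono_on hxz.le hGint intervalIntegrable_const ?_
      intro t ht
      refine (hsub ⟨?_, hx0.trans ht.1⟩).le
      rw [Metric.mem_ball, Real.dist_eq, abs_of_nonneg (by linarith [ht.1])]
      linarith [ht.2]
    rw [intervalIntegral.integral_const, smul_eq_mul] at h2
    have hpos : (0:ℝ) < z - x := by linarith
    have : (z - x)⁻¹ * (ψ z - ψ x) ≤ r' := by
      rw [hψz]
      have hle : ∫ t in x..z, D y t ≤ (z - x) * r' := le_trans h1 h2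
      calc (z - x)⁻¹ * ∫ t in x..z, D y t ≤ (z - x)⁻¹ * ((z - x) * r') :=
            mul_le_mul_of_nonneg_left hle (inv_nonneg.mpr hpos.le)
        _ = r' := by field_simp
    linarith
  have bound : ∀ x ∈ Set.Ico (0:ℝ) T, G x ≤ -lam * ψ x + 2 * (p - f T) := by
    intro x hx
    have := monoT x hx
    simp only [hGdef, hψdef]
    linarith
  have hψc : ContinuousOn ψ (Set.Icc 0 T) :=
    (ψcont y).mono (fun t ht => ht.1)
  have ha : ψ 0 ≤ dist x0 y ^ 2 := by
    simp only [hψdef, hξ0]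
    exact le_rfl
  have hgr := le_gronwallBound_of_liminf_deriv_right_le hψc hf' ha bound T ⟨hT.le, le_rfl⟩
  rw [sub_zero] at hgr
  by_cases hlam : lam = 0
  · subst hlam
    rw [neg_zero, gronwallBound_K0] at hgr
    have hgr2 : ψ T ≤ dist x0 y ^ 2 + 2 * (p - f T) * T := hgr
    rw [if_pos rfl]
    have he : Real.exp (-(0:ℝ) * T) = 1 := by norm_num
    rw [he]
    show ψ T ≤ 1 * dist x0 y ^ 2 - 2 * T * (f T - p)
    linarith
  · rw [if_neg hlam]
    have hK' : -lam ≠ 0 := neg_ne_zero.mpr hlam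
    rw [gronwallBound_of_K_ne_0 hK'] at hgr
    have hgr2 : ψ T ≤ dist x0 y ^ 2 * Real.exp (-lam * T)
        + 2 * (p - f T) / -lam * (Real.exp (-lam * T) - 1) := hgr
    have heq : dist x0 y ^ 2 * Real.exp (-lam * T)
        + 2 * (p - f T) / -lam * (Real.exp (-lam * T) - 1)
        = Real.exp (-lam * T) * dist x0 y ^ 2
          - 2 * ((1 - Real.exp (-lam * T)) / lam) * (f T - p) := by
      field_simp
      ring
    rw [heq] at hgr2
    show ψ T ≤ Real.exp (-lam * T) * dist x0 y ^ 2
      - 2 * ((1 - Real.exp (-lam * T)) / lam) * (f T - p)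
    exact hgr2
end

section
/- Let φ : X → (-∞,∞] be λ-convex on a geodesic metric space and x₀ ∈ D(φ). Then the local slope |∇φ|(x₀) = 0 if and only if sup_{x ≠ x₀} (φ(x₀) − φ(x))/d(x₀,x)² < ∞. -/
open Filter ENNReal

/-- The descending local slope `|∇φ|(x) = limsup_{y→x} max{φ(x)−φ(y),0}/d(x,y)`. -/
noncomputable def descSlope {X : Type*} [MetricSpace X] (φ : X → EReal) (x : X) : ℝ≥0∞ :=
  Filter.limsup (fun y => ENNReal.ofReal ((max (φ x - φ y) 0).toReal / dist x y))
    (nhdsWithin x {x}ᶜ)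

lemma coe_max_aux (a b : ℝ) : ((max a b : ℝ) : EReal) = max (a:EReal) (b:EReal) :=
  (Monotone.map_max (f := fun x : ℝ => (x : EReal))
    (fun _ _ h => EReal.coe_le_coe_iff.mpr h))

/-- The slope term at a point `y` with everything finite. -/
lemma slope_term_eq {X : Type*} [MetricSpace X] (φ : X → EReal) (x₀ y : X)
    (h0t : φ x₀ ≠ ⊤) (h0b : φ x₀ ≠ ⊥) (hyt : φ y ≠ ⊤) (hyb : φ y ≠ ⊥) :
    (max (φ x₀ - φ y) 0).toReal = max ((φ x₀).toReal - (φ y).toReal) 0 := by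
  rw [← EReal.coe_toReal h0t h0b, ← EReal.coe_toReal hyt hyb, ← EReal.coe_sub]
  rw [show (0:EReal) = ((0:ℝ):EReal) from rfl, ← coe_max_aux]
  simp [EReal.toReal_coe]

/-- for a λ-convex `φ` on a geodesic metric space and `x₀ ∈ D(φ)`,
`|∇φ|(x₀) = 0` iff `sup_{x ≠ x₀} (φ(x₀) − φ(x))/d(x₀,x)² < ∞`. -/
theorem stmt15 {X : Type*} [MetricSpace X] (lam : ℝ)
    (φ : X → EReal) (hbot : ∀ w, φ w ≠ ⊥)
    (hgeo : ∀ x y : X, ∃ γ : ℝ → X, IsMinGeodesic γ ∧ γ 0 = x ∧ γ 1 = y)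
    (hlam : ∀ x y : X, φ x ≠ ⊤ → φ y ≠ ⊤ →
      ∃ γ : ℝ → X, IsMinGeodesic γ ∧ γ 0 = x ∧ γ 1 = y ∧
        ∀ t ∈ Set.Icc (0:ℝ) 1,
          φ (γ t) ≤ ((1 - t : ℝ) : EReal) * φ x + ((t : ℝ) : EReal) * φ y
            - ((lam / 2 * (1 - t) * t * dist x y ^ 2 : ℝ) : EReal))
    (x₀ : X) (hx₀ : φ x₀ ≠ ⊤) :
    descSlope φ x₀ = 0 ↔
      ∃ C : ℝ, ∀ x : X, x ≠ x₀ → φ x₀ - φ x ≤ ((C * dist x₀ x ^ 2 : ℝ) : EReal) := by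
  set A : ℝ := (φ x₀).toReal with hA
  have hAx : φ x₀ = (A : EReal) := (EReal.coe_toReal hx₀ (hbot x₀)).symm
  constructor
  · -- slope 0 implies quadratic bound with C = -lam/2
    intro h
    refine ⟨-lam/2, fun x hx => ?_⟩
    by_cases hxt : φ x = ⊤
    · rw [hxt, EReal.sub_top]; exact bot_le
    set B : ℝ := (φ x).toReal with hB
    have hBx : φ x = (B : EReal) := (EReal.coe_toReal hxt (hbot x)).symm
    set d : ℝ := dist x₀ x with hdd
    have hd : 0 < d := dist_pos.mpr (Ne.symm hx)
    rw [hAx, hBx, ← EReal.coe_sub, EReal.coe_le_coe_iff]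
    by_contra hcon
    push_neg at hcon
    set m : ℝ := ((A - B) + lam/2*d^2)/d with hm
    have hm0 : 0 < m := div_pos (by nlinarith) hd
    have hsl : descSlope φ x₀ < ENNReal.ofReal (m/2) := by
      rw [h]; exact ENNReal.ofReal_pos.mpr (by linarith)
    have hev := Filter.eventually_lt_of_limsup_lt hsl
    rw [Filter.eventually_iff, Metric.mem_nhdsWithin_iff] at hev
    obtain ⟨δ, hδ, hδ'⟩ := hev
    obtain ⟨γ, hγ, hγ0, hγ1, hconv⟩ := hlam x₀ x hx₀ hxt
    set t : ℝ := min 1 (min (δ/(2*d)) (m/(2*((abs lam)*d+1)))) with ht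
    have habs : (0:ℝ) ≤ (abs lam) := abs_nonneg lam
    have ht0 : 0 < t := by
      apply lt_min one_pos
      exact lt_min (div_pos hδ (by linarith)) (div_pos hm0 (by nlinarith))
    have ht1 : t ≤ 1 := min_le_left _ _
    have htδ : t ≤ δ/(2*d) := le_trans (min_le_right _ _) (min_le_left _ _)
    have htm : t ≤ m/(2*((abs lam)*d+1)) := le_trans (min_le_right _ _) (min_le_right _ _)
    have hmem : t ∈ Set.Icc (0:ℝ) 1 := ⟨ht0.le, ht1⟩
    have hdist : dist x₀ (γ t) = t * d := by
      have := hγ 0 ⟨le_refl _, zero_le_one⟩ t hmem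
      rw [hγ0, hγ1] at this
      rw [this, zero_sub, abs_neg, abs_of_nonneg ht0.le]
    have hdpos : 0 < dist x₀ (γ t) := by rw [hdist]; positivity
    have hyne : γ t ∈ Metric.ball x₀ δ ∩ {x₀}ᶜ := by
      constructor
      · rw [Metric.mem_ball, dist_comm, hdist]
        have h3 : t * (2*d) ≤ δ := (le_div_iff₀ (by positivity)).mp htδ
        nlinarith [mul_pos ht0 hd]
      · simp only [Set.mem_compl_iff, Set.mem_singleton_iff]
        intro hc; rw [hc] at hdpos; simp at hdpos
    have hflt := hδ' hyne
    -- now the lower bound on the slope term at γ t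
    have hRHS := hconv t hmem
    rw [hAx, hBx] at hRHS
    have hRHS' : φ (γ t) ≤ (((1 - t)*A + t*B - lam/2*(1-t)*t*d^2 : ℝ) : EReal) := by
      refine le_trans hRHS (le_of_eq ?_)
      push_cast
      rfl
    have hPt : φ (γ t) ≠ ⊤ := ne_top_of_le_ne_top (EReal.coe_ne_top _) hRHS'
    set P : ℝ := (φ (γ t)).toReal with hP
    have hPx : φ (γ t) = (P : EReal) := (EReal.coe_toReal hPt (hbot _)).symm
    rw [hPx, EReal.coe_le_coe_iff] at hRHS'
    have hterm : (max (φ x₀ - φ (γ t)) 0).toReal = max (A - P) 0 :=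
      slope_term_eq φ x₀ (γ t) hx₀ (hbot x₀) hPt (hbot _)
    have hge : ENNReal.ofReal (m/2) ≤
        ENNReal.ofReal ((max (φ x₀ - φ (γ t)) 0).toReal / dist x₀ (γ t)) := by
      apply ENNReal.ofReal_le_ofReal
      rw [hterm, hdist]
      have h1 : A - P ≥ t*(A-B) + lam/2*(1-t)*t*d^2 := by nlinarith
      have h2 : (t*(A-B) + lam/2*(1-t)*t*d^2)/(t*d) = m - lam/2*t*d := by
        rw [hm]; field_simp; ring
      calc m/2 ≤ m - lam/2*t*d := by
            have hl : lam ≤ (abs lam) := le_abs_self lam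
            have h4 : t * (2*((abs lam)*d+1)) ≤ m := (le_div_iff₀ (by positivity)).mp htm
            nlinarith [mul_pos ht0 hd, mul_nonneg (mul_nonneg habs ht0.le) hd.le]
      _ = (t*(A-B) + lam/2*(1-t)*t*d^2)/(t*d) := h2.symm
      _ ≤ (A - P)/(t*d) := by gcongr
      _ ≤ max (A - P) 0 / (t*d) := by gcongr; exact le_max_left _ _
    exact absurd hflt (not_lt.mpr hge)
  · -- quadratic bound implies slope 0
    rintro ⟨C, hC⟩
    rw [descSlope, ← nonpos_iff_eq_zero]
    apply ENNReal.le_of_forall_pos_le_add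
    intro ε hε _
    rw [zero_add]
    refine Filter.limsup_le_of_le (by isBoundedDefault) ?_
    have hε' : (0:ℝ) < (ε:ℝ) := by exact_mod_cast hε
    have hM : (0:ℝ) ≤ max C 0 := le_max_right _ _
    have hδ0 : (0:ℝ) < (ε:ℝ)/(max C 0 + 1) := div_pos hε' (by linarith)
    rw [Filter.eventually_iff, Metric.mem_nhdsWithin_iff]
    refine ⟨(ε:ℝ)/(max C 0 + 1), hδ0, fun y hy => ?_⟩
    obtain ⟨hy1, hy2⟩ := hy
    have hyne : y ≠ x₀ := hy2
    have hd : 0 < dist x₀ y := dist_pos.mpr (Ne.symm hyne)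
    have hdlt : dist x₀ y < (ε:ℝ)/(max C 0 + 1) := by
      rw [dist_comm]; exact Metric.mem_ball.mp hy1
    show ENNReal.ofReal _ ≤ _
    rw [← ENNReal.ofReal_coe_nnreal]
    apply ENNReal.ofReal_le_ofReal
    by_cases hyt : φ y = ⊤
    · rw [hyt, EReal.sub_top]
      simp [hε'.le]
    · set B : ℝ := (φ y).toReal with hB
      have hBx : φ y = (B : EReal) := (EReal.coe_toReal hyt (hbot y)).symm
      have hcc : A - B ≤ C * dist x₀ y ^ 2 := by
        have h6 := hC y hyne
        rw [hAx, hBx, ← EReal.coe_sub, EReal.coe_le_coe_iff] at h6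
        exact h6
      rw [slope_term_eq φ x₀ y hx₀ (hbot x₀) hyt (hbot y)]
      have h5 : max (A - B) 0 ≤ max C 0 * dist x₀ y ^ 2 := by
        apply max_le _ (by positivity)
        nlinarith [le_max_left C 0]
      have h7 : dist x₀ y * (max C 0 + 1) < (ε:ℝ) :=
        (lt_div_iff₀ (by linarith)).mp hdlt
      calc max (A - B) 0 / dist x₀ y ≤ (max C 0 * dist x₀ y ^ 2) / dist x₀ y := by gcongr
        _ = max C 0 * dist x₀ y := by field_simp
        _ ≤ (ε:ℝ) := by nlinarith
end

section
/- Trotter–Kato step estimate: in a metric space with K-convex squared distance and commutativity, let φ₁ be λ₁-convex, φ₂ be λ₂-convex, φ = φ₁ + φ₂, and suppose ẑ minimizes w ↦ φ₁(w) + d(z,w)²/(2τ) and z' minimizes w ↦ φ₂(w) + d(ẑ,w)²/(2τ). Then for all w ∈ D(φ): (1 + λ₂τ) d(z',w)² ≤ d(z,w)² − λ₁τ d(ẑ,w)² + 2τ(φ(w) − φ₁(ẑ) − φ₂(z')) − min{0,K}·τ(φ₁(z) − φ₁(ẑ) + φ₂(ẑ) − φ₂(z')). -/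
lemma key_step {X : Type*} [MetricSpace X] (K lam τ : ℝ) (hτ : 0 < τ)
    (φ : X → EReal)
    (hgeo : ∀ x y : X, ∃ γ : ℝ → X, IsMinGeodesic γ ∧ γ 0 = x ∧ γ 1 = y)
    (hcomm : ∀ γ η : ℝ → X, IsMinGeodesic γ → IsMinGeodesic η → γ 0 = η 0 →
      ∃ L : ℝ,
        Filter.Tendsto (fun s => (dist (γ s) (η 1) ^ 2 - dist (γ 0) (η 1) ^ 2) / s)
          (nhdsWithin 0 (Set.Ioi 0)) (nhds L) ∧
        Filter.Tendsto (fun u => (dist (η u) (γ 1) ^ 2 - dist (η 0) (γ 1) ^ 2) / u)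
          (nhdsWithin 0 (Set.Ioi 0)) (nhds L))
    (hK : ∀ (y : X) (γ : ℝ → X), IsMinGeodesic γ → ∀ t ∈ Set.Icc (0:ℝ) 1,
      dist y (γ t) ^ 2 ≤ (1 - t) * dist y (γ 0) ^ 2 + t * dist y (γ 1) ^ 2
        - K / 2 * (1 - t) * t * dist (γ 0) (γ 1) ^ 2)
    (hlam : ∀ γ : ℝ → X, IsMinGeodesic γ → ∀ t ∈ Set.Icc (0:ℝ) 1,
      φ (γ t) ≤ ((1 - t : ℝ) : EReal) * φ (γ 0) + ((t : ℝ) : EReal) * φ (γ 1)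
        - ((lam / 2 * (1 - t) * t * dist (γ 0) (γ 1) ^ 2 : ℝ) : EReal))
    (x xτ y : X) (a b : ℝ) (ha : φ xτ = (a : EReal)) (hb : φ y = (b : EReal))
    (hmin : ∀ w, φ xτ + ((dist x xτ ^ 2 / (2 * τ) : ℝ) : EReal)
      ≤ φ w + ((dist x w ^ 2 / (2 * τ) : ℝ) : EReal)) :
    (1 + lam * τ) * dist xτ y ^ 2
      ≤ dist x y ^ 2 + 2 * τ * (b - a) - K / 2 * dist x xτ ^ 2 := by
  obtain ⟨η, hη, hη0, hη1⟩ := hgeo xτ y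
  obtain ⟨γ, hγ, hγ0, hγ1⟩ := hgeo xτ x
  obtain ⟨L, hLs, hLu⟩ := hcomm γ η hγ hη (hγ0.trans hη0.symm)
  have memIoc : Set.Ioc (0:ℝ) 1 ∈ nhdsWithin (0:ℝ) (Set.Ioi 0) :=
    Ioc_mem_nhdsGT_of_mem ⟨le_refl 0, zero_lt_one⟩
  -- lower bound on L
  have hlow : ∀ u ∈ Set.Ioc (0:ℝ) 1,
      2 * τ * (a - b) + lam * τ * (1 - u) * dist xτ y ^ 2
        ≤ (dist (η u) (γ 1) ^ 2 - dist (η 0) (γ 1) ^ 2) / u := by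
    intro u hu
    have h2 := hlam η hη u ⟨hu.1.le, hu.2⟩
    rw [hη0, hη1, ha, hb, ← EReal.coe_mul, ← EReal.coe_mul, ← EReal.coe_add,
      ← EReal.coe_sub] at h2
    have h1 := hmin (η u)
    rw [ha] at h1
    have h3 : φ (η u) + ((dist x (η u) ^ 2 / (2 * τ) : ℝ) : EReal)
        ≤ (((1 - u) * a + u * b - lam / 2 * (1 - u) * u * dist xτ y ^ 2
            + dist x (η u) ^ 2 / (2 * τ) : ℝ) : EReal) := by
      rw [EReal.coe_add]
      exact add_le_add h2 (le_refl _)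
    have h4 := le_trans h1 h3
    rw [← EReal.coe_add, EReal.coe_le_coe_iff] at h4
    rw [hγ1, hη0, le_div_iff₀ hu.1]
    have h5 : 2 * τ * (a + dist x xτ ^ 2 / (2 * τ))
        ≤ 2 * τ * ((1 - u) * a + u * b - lam / 2 * (1 - u) * u * dist xτ y ^ 2
            + dist x (η u) ^ 2 / (2 * τ)) :=
      mul_le_mul_of_nonneg_left h4 (by positivity)
    have e1 : 2 * τ * (dist x xτ ^ 2 / (2 * τ)) = dist x xτ ^ 2 := by field_simp
    have e2 : 2 * τ * (dist x (η u) ^ 2 / (2 * τ)) = dist x (η u) ^ 2 := by field_simp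
    rw [dist_comm (η u) x, dist_comm xτ x]
    nlinarith [h5]
  have t1 : Filter.Tendsto
      (fun u : ℝ => 2 * τ * (a - b) + lam * τ * (1 - u) * dist xτ y ^ 2)
      (nhdsWithin 0 (Set.Ioi 0))
      (nhds (2 * τ * (a - b) + lam * τ * dist xτ y ^ 2)) := by
    have hc : Continuous
        (fun u : ℝ => 2 * τ * (a - b) + lam * τ * (1 - u) * dist xτ y ^ 2) := by
      fun_prop
    have := (hc.tendsto 0).mono_left (nhdsWithin_le_nhds (s := Set.Ioi (0:ℝ)))
    simpa using this
  have hL1 : 2 * τ * (a - b) + lam * τ * dist xτ y ^ 2 ≤ L :=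
    le_of_tendsto_of_tendsto t1 hLu (Filter.eventually_of_mem memIoc hlow)
  -- upper bound on L
  have hhigh : ∀ s ∈ Set.Ioc (0:ℝ) 1,
      (dist (γ s) (η 1) ^ 2 - dist (γ 0) (η 1) ^ 2) / s
        ≤ dist x y ^ 2 - dist xτ y ^ 2 - K / 2 * (1 - s) * dist x xτ ^ 2 := by
    intro s hs
    have h6 := hK y γ hγ s ⟨hs.1.le, hs.2⟩
    rw [hγ0, hγ1] at h6
    rw [hη1, hγ0, div_le_iff₀ hs.1]
    rw [dist_comm (γ s) y, dist_comm xτ y, dist_comm x y, dist_comm x xτ]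
    nlinarith [h6]
  have t2 : Filter.Tendsto
      (fun s : ℝ => dist x y ^ 2 - dist xτ y ^ 2 - K / 2 * (1 - s) * dist x xτ ^ 2)
      (nhdsWithin 0 (Set.Ioi 0))
      (nhds (dist x y ^ 2 - dist xτ y ^ 2 - K / 2 * dist x xτ ^ 2)) := by
    have hc : Continuous
        (fun s : ℝ => dist x y ^ 2 - dist xτ y ^ 2 - K / 2 * (1 - s) * dist x xτ ^ 2) := by
      fun_prop
    have := (hc.tendsto 0).mono_left (nhdsWithin_le_nhds (s := Set.Ioi (0:ℝ)))
    simpa using this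
  have hL2 : L ≤ dist x y ^ 2 - dist xτ y ^ 2 - K / 2 * dist x xτ ^ 2 :=
    le_of_tendsto_of_tendsto hLs t2 (Filter.eventually_of_mem memIoc hhigh)
  linarith

/-- Trotter–Kato step estimate: in a metric space with `K`-convex squared
distance and commutativity, if `zhat` is a Moreau–Yosida minimizer of the λ₁-convex `φ₁` from `z`
and `z'` is one of the λ₂-convex `φ₂` from `zhat` (both with step `τ`), then for all
`w ∈ D(φ₁ + φ₂)`:
`(1 + λ₂τ) d(z',w)² ≤ d(z,w)² − λ₁τ d(zhat,w)² + 2τ(φ(w) − φ₁(zhat) − φ₂(z'))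
  − min{0,K}·τ·(φ₁(z) − φ₁(zhat) + φ₂(zhat) − φ₂(z'))`. -/
theorem stmt18 {X : Type*} [MetricSpace X] (K lam₁ lam₂ τ : ℝ) (hτ : 0 < τ)
    (φ₁ φ₂ : X → EReal) (hbot₁ : ∀ w, φ₁ w ≠ ⊥) (hbot₂ : ∀ w, φ₂ w ≠ ⊥)
    (hgeo : ∀ x y : X, ∃ γ : ℝ → X, IsMinGeodesic γ ∧ γ 0 = x ∧ γ 1 = y)
    (hcomm : ∀ γ η : ℝ → X, IsMinGeodesic γ → IsMinGeodesic η → γ 0 = η 0 →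
      ∃ L : ℝ,
        Filter.Tendsto (fun s => (dist (γ s) (η 1) ^ 2 - dist (γ 0) (η 1) ^ 2) / s)
          (nhdsWithin 0 (Set.Ioi 0)) (nhds L) ∧
        Filter.Tendsto (fun u => (dist (η u) (γ 1) ^ 2 - dist (η 0) (γ 1) ^ 2) / u)
          (nhdsWithin 0 (Set.Ioi 0)) (nhds L))
    (hK : ∀ (y : X) (γ : ℝ → X), IsMinGeodesic γ → ∀ t ∈ Set.Icc (0:ℝ) 1,
      dist y (γ t) ^ 2 ≤ (1 - t) * dist y (γ 0) ^ 2 + t * dist y (γ 1) ^ 2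
        - K / 2 * (1 - t) * t * dist (γ 0) (γ 1) ^ 2)
    (hlam₁ : ∀ γ : ℝ → X, IsMinGeodesic γ → ∀ t ∈ Set.Icc (0:ℝ) 1,
      φ₁ (γ t) ≤ ((1 - t : ℝ) : EReal) * φ₁ (γ 0) + ((t : ℝ) : EReal) * φ₁ (γ 1)
        - ((lam₁ / 2 * (1 - t) * t * dist (γ 0) (γ 1) ^ 2 : ℝ) : EReal))
    (hlam₂ : ∀ γ : ℝ → X, IsMinGeodesic γ → ∀ t ∈ Set.Icc (0:ℝ) 1,
      φ₂ (γ t) ≤ ((1 - t : ℝ) : EReal) * φ₂ (γ 0) + ((t : ℝ) : EReal) * φ₂ (γ 1)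
        - ((lam₂ / 2 * (1 - t) * t * dist (γ 0) (γ 1) ^ 2 : ℝ) : EReal))
    (z zhat z' : X) (hz₁ : φ₁ z ≠ ⊤) (hz₂ : φ₂ z ≠ ⊤)
    (hmin₁ : ∀ w, φ₁ zhat + ((dist z zhat ^ 2 / (2 * τ) : ℝ) : EReal)
      ≤ φ₁ w + ((dist z w ^ 2 / (2 * τ) : ℝ) : EReal))
    (hmin₂ : ∀ w, φ₂ z' + ((dist zhat z' ^ 2 / (2 * τ) : ℝ) : EReal)
      ≤ φ₂ w + ((dist zhat w ^ 2 / (2 * τ) : ℝ) : EReal)) :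
    ∀ w : X, φ₁ w ≠ ⊤ → φ₂ w ≠ ⊤ →
      (((1 + lam₂ * τ) * dist z' w ^ 2 : ℝ) : EReal)
        ≤ ((dist z w ^ 2 - lam₁ * τ * dist zhat w ^ 2 : ℝ) : EReal)
          + ((2 * τ : ℝ) : EReal) * ((φ₁ w + φ₂ w) - φ₁ zhat - φ₂ z')
          - ((min 0 K * τ : ℝ) : EReal) * ((φ₁ z - φ₁ zhat) + (φ₂ zhat - φ₂ z')) := by
  intro w hw₁ hw₂
  -- real values
  set K' := min 0 K with hK'def
  have hK'le : K' ≤ K := min_le_right 0 K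
  have hK'nonpos : K' ≤ 0 := min_le_left 0 K
  have hK' : ∀ (y : X) (γ : ℝ → X), IsMinGeodesic γ → ∀ t ∈ Set.Icc (0:ℝ) 1,
      dist y (γ t) ^ 2 ≤ (1 - t) * dist y (γ 0) ^ 2 + t * dist y (γ 1) ^ 2
        - K' / 2 * (1 - t) * t * dist (γ 0) (γ 1) ^ 2 := by
    intro y γ hγ t ht
    have h := hK y γ hγ t ht
    have ht1 : 0 ≤ (1 - t) * t * dist (γ 0) (γ 1) ^ 2 :=
      mul_nonneg (mul_nonneg (by linarith [ht.2]) ht.1) (sq_nonneg _)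
    have h1 : K' / 2 * ((1 - t) * t * dist (γ 0) (γ 1) ^ 2)
        ≤ K / 2 * ((1 - t) * t * dist (γ 0) (γ 1) ^ 2) :=
      mul_le_mul_of_nonneg_right (by linarith) ht1
    nlinarith [h1]
  obtain ⟨b₁, hb₁⟩ : ∃ r : ℝ, φ₁ w = (r : EReal) := by
    refine ⟨(φ₁ w).toReal, ((EReal.coe_toReal hw₁ (hbot₁ w))).symm⟩
  obtain ⟨b₂, hb₂⟩ : ∃ r : ℝ, φ₂ w = (r : EReal) := by
    refine ⟨(φ₂ w).toReal, ((EReal.coe_toReal hw₂ (hbot₂ w))).symm⟩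
  obtain ⟨c₁, hc₁⟩ : ∃ r : ℝ, φ₁ z = (r : EReal) := by
    refine ⟨(φ₁ z).toReal, ((EReal.coe_toReal hz₁ (hbot₁ z))).symm⟩
  -- φ₁ zhat is real
  have hzhat₁top : φ₁ zhat ≠ ⊤ := by
    intro hcon
    have h := hmin₁ z
    rw [hcon, hc₁, dist_self] at h
    simp [EReal.top_add_coe, ← EReal.coe_add] at h
  obtain ⟨a₁, ha₁⟩ : ∃ r : ℝ, φ₁ zhat = (r : EReal) := by
    refine ⟨(φ₁ zhat).toReal, ((EReal.coe_toReal hzhat₁top (hbot₁ zhat))).symm⟩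
  -- φ₂ z' is real
  have hz'₂top : φ₂ z' ≠ ⊤ := by
    intro hcon
    have h := hmin₂ w
    rw [hcon, hb₂] at h
    simp [EReal.top_add_coe, ← EReal.coe_add] at h
  obtain ⟨a₂, ha₂⟩ : ∃ r : ℝ, φ₂ z' = (r : EReal) := by
    refine ⟨(φ₂ z').toReal, ((EReal.coe_toReal hz'₂top (hbot₂ z'))).symm⟩
  -- key estimates
  have key₁ : (1 + lam₁ * τ) * dist zhat w ^ 2
      ≤ dist z w ^ 2 + 2 * τ * (b₁ - a₁) - K' / 2 * dist z zhat ^ 2 :=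
    key_step K' lam₁ τ hτ φ₁ hgeo hcomm hK' hlam₁ z zhat w a₁ b₁ ha₁ hb₁ hmin₁
  have key₂ : (1 + lam₂ * τ) * dist z' w ^ 2
      ≤ dist zhat w ^ 2 + 2 * τ * (b₂ - a₂) - K' / 2 * dist zhat z' ^ 2 :=
    key_step K' lam₂ τ hτ φ₂ hgeo hcomm hK' hlam₂ zhat z' w a₂ b₂ ha₂ hb₂ hmin₂
  -- bound on dist z zhat
  have bound₁ : dist z zhat ^ 2 ≤ 2 * τ * (c₁ - a₁) := by
    have h := hmin₁ z
    rw [ha₁, hc₁, dist_self, ← EReal.coe_add, ← EReal.coe_add, EReal.coe_le_coe_iff] at h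
    norm_num at h
    have e : dist z zhat ^ 2 ≤ (c₁ - a₁) * (2 * τ) := by
      rw [← div_le_iff₀ (by positivity : (0:ℝ) < 2 * τ)]; linarith
    nlinarith [e]
  by_cases hzhat₂top : φ₂ zhat = ⊤
  · -- φ₂ zhat = ⊤
    rcases lt_or_eq_of_le hK'nonpos with hneg | hzero
    · -- K' < 0 : RHS is ⊤
      have hS : (φ₁ z - φ₁ zhat) + (φ₂ zhat - φ₂ z') = ⊤ := by
        rw [hc₁, ha₁, ha₂, hzhat₂top, EReal.top_sub_coe, ← EReal.coe_sub,
          EReal.coe_add_top]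
      rw [hS]
      have hmul : ((K' * τ : ℝ) : EReal) * ⊤ = ⊥ :=
        EReal.coe_mul_top_of_neg (by nlinarith)
      rw [hmul, hb₁, hb₂, ha₁, ha₂, ← EReal.coe_add, ← EReal.coe_sub, ← EReal.coe_sub,
        ← EReal.coe_mul, ← EReal.coe_add, EReal.coe_sub_bot]
      exact le_top
    · -- K' = 0
      rw [hzero] at key₁ key₂
      rw [hb₁, hb₂, ha₁, ha₂, hzero, zero_mul, EReal.coe_zero, zero_mul, sub_zero]
      norm_cast
      nlinarith [key₁, key₂]
  · -- φ₂ zhat real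
    obtain ⟨a₂', ha₂'⟩ : ∃ r : ℝ, φ₂ zhat = (r : EReal) := by
      refine ⟨(φ₂ zhat).toReal, ((EReal.coe_toReal hzhat₂top (hbot₂ zhat))).symm⟩
    have bound₂ : dist zhat z' ^ 2 ≤ 2 * τ * (a₂' - a₂) := by
      have h := hmin₂ zhat
      rw [ha₂, ha₂', dist_self, ← EReal.coe_add, ← EReal.coe_add, EReal.coe_le_coe_iff] at h
      norm_num at h
      have e : dist zhat z' ^ 2 ≤ (a₂' - a₂) * (2 * τ) := by
        rw [← div_le_iff₀ (by positivity : (0:ℝ) < 2 * τ)]; linarith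
      nlinarith [e]
    rw [hb₁, hb₂, ha₁, ha₂, hc₁, ha₂']
    norm_cast
    have hb1 : -(K' / 2) * dist z zhat ^ 2 ≤ -(K' / 2) * (2 * τ * (c₁ - a₁)) :=
      mul_le_mul_of_nonneg_left bound₁ (by linarith)
    have hb2 : -(K' / 2) * dist zhat z' ^ 2 ≤ -(K' / 2) * (2 * τ * (a₂' - a₂)) :=
      mul_le_mul_of_nonneg_left bound₂ (by linarith)
    nlinarith [key₁, key₂, hb1, hb2]
end
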